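/- arXiv:1110.1974 — 10 statements merged into one kernel-verified Lean document; each statement's English description precedes it below -/
import Mathlib

section
/- Let M be a locally compact metric space with a continuous flow θ, and K a compact, invariant, proper subset of M. Then K is an attractor (i.e., stable and B⁺(K) is a neighbourhood of K) if and only if there exists a neighbourhood U of K such that no point z ∈ U \ K has its entire negative orbit O⁻(z) contained in U. -/
open Set Filter Metric Topology TopologicalSpace

variable {M : Type*} [MetricSpace M]

/-- The full orbit of a point under a flow. -/
def orbit (ϕ : Flow ℝ M) (x : M) : Set M := Set.range fun t => ϕ t x

/-- The positive (forward) half orbit. -/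
def posOrbit (ϕ : Flow ℝ M) (x : M) : Set M := {y | ∃ t : ℝ, 0 ≤ t ∧ ϕ t x = y}

/-- The negative (backward) half orbit. -/
def negOrbit (ϕ : Flow ℝ M) (x : M) : Set M := {y | ∃ t : ℝ, t ≤ 0 ∧ ϕ t x = y}

/-- Positive orbital saturation of a set. -/
def posSat (ϕ : Flow ℝ M) (s : Set M) : Set M := ⋃ x ∈ s, posOrbit ϕ x

/-- The ω-limit set of a point. -/
def omegaSet (ϕ : Flow ℝ M) (x : M) : Set M :=
  ⋂ t : ℝ, closure {y | ∃ s : ℝ, t ≤ s ∧ ϕ s x = y}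

/-- The α-limit set of a point. -/
def alphaSet (ϕ : Flow ℝ M) (x : M) : Set M :=
  ⋂ t : ℝ, closure {y | ∃ s : ℝ, s ≤ t ∧ ϕ s x = y}

/-- A set is invariant under the flow. -/
def flowInv (ϕ : Flow ℝ M) (s : Set M) : Prop := ∀ t : ℝ, ϕ t '' s = s

/-- Stability of a set: every neighbourhood contains a positively invariant neighbourhood. -/
def Stable (ϕ : Flow ℝ M) (K : Set M) : Prop :=
  ∀ U ∈ 𝓝ˢ K, ∃ V ∈ 𝓝ˢ K, posSat ϕ V ⊆ U

/-- The set of points whose ω-limit set is nonempty and contained in `K`. -/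
def Bplus (ϕ : Flow ℝ M) (K : Set M) : Set M :=
  {x | (omegaSet ϕ x).Nonempty ∧ omegaSet ϕ x ⊆ K}

/-- `K` is an attractor: stable and `B⁺(K)` is a neighbourhood of `K`. -/
def IsAttractor (ϕ : Flow ℝ M) (K : Set M) : Prop :=
  Stable ϕ K ∧ Bplus ϕ K ∈ 𝓝ˢ K

/-- `K` is a repeller: an attractor for the time-reversed flow. -/
def IsRepeller (ϕ : Flow ℝ M) (K : Set M) : Prop :=
  IsAttractor ϕ.reverse K

/-- A minimal set of the flow. -/
def IsMinimalSet (ϕ : Flow ℝ M) (s : Set M) : Prop :=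
  s.Nonempty ∧ IsClosed s ∧ flowInv ϕ s ∧
    ∀ t, t ⊆ s → t.Nonempty → IsClosed t → flowInv ϕ t → t = s

/-- `K` is stagnant. -/
def Stagnant (ϕ : Flow ℝ M) (K : Set M) : Prop :=
  ∃ x ∉ K, ∃ y ∉ K, (alphaSet ϕ x).Nonempty ∧ alphaSet ϕ x ⊆ K ∧
    (omegaSet ϕ y).Nonempty ∧ omegaSet ϕ y ⊆ K

/-- `K` is isolated from minimal sets. -/
def IsolatedFromMinimals (ϕ : Flow ℝ M) (K : Set M) : Prop :=
  ∃ U ∈ 𝓝ˢ K, ∀ s, s ⊆ U \ K → ¬ IsMinimalSet ϕ s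

/-- `x` is a periodic point with minimal period `p`: the set of periods is `pℤ`. -/
def MinPeriod (ϕ : Flow ℝ M) (x : M) (p : ℝ) : Prop :=
  0 < p ∧ {t : ℝ | ϕ t x = x} = {t : ℝ | ∃ n : ℤ, t = n * p}

/-- `x` is an equilibrium. -/
def IsEquilibrium (ϕ : Flow ℝ M) (x : M) : Prop := ∀ t : ℝ, ϕ t x = x

lemma shift_omega (ϕ : Flow ℝ M) {x p : M} (hp : p ∈ omegaSet ϕ x) (r : ℝ) :
    ϕ r p ∈ omegaSet ϕ x := by
  rw [omegaSet, mem_iInter] at hp ⊢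
  intro t
  have h1 : p ∈ closure {y | ∃ s : ℝ, t - r ≤ s ∧ ϕ s x = y} := hp (t - r)
  have hc : Continuous fun y : M => ϕ r y := ϕ.continuous continuous_const continuous_id
  have h2 : ϕ r p ∈ closure ((fun y => ϕ r y) '' {y | ∃ s : ℝ, t - r ≤ s ∧ ϕ s x = y}) :=
    image_closure_subset_closure_image hc (mem_image_of_mem _ h1)
  refine closure_mono ?_ h2
  rintro _ ⟨y, ⟨s, hs, rfl⟩, rfl⟩
  exact ⟨r + s, by linarith, by simp [ϕ.map_add]⟩

lemma shift_alpha (ϕ : Flow ℝ M) {x p : M} (hp : p ∈ alphaSet ϕ x) (r : ℝ) :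
    ϕ r p ∈ alphaSet ϕ x := by
  rw [alphaSet, mem_iInter] at hp ⊢
  intro t
  have h1 : p ∈ closure {y | ∃ s : ℝ, s ≤ t - r ∧ ϕ s x = y} := hp (t - r)
  have hc : Continuous fun y : M => ϕ r y := ϕ.continuous continuous_const continuous_id
  have h2 : ϕ r p ∈ closure ((fun y => ϕ r y) '' {y | ∃ s : ℝ, s ≤ t - r ∧ ϕ s x = y}) :=
    image_closure_subset_closure_image hc (mem_image_of_mem _ h1)
  refine closure_mono ?_ h2
  rintro _ ⟨y, ⟨s, hs, rfl⟩, rfl⟩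
  exact ⟨r + s, by linarith, by simp [ϕ.map_add]⟩

lemma omega_nonempty_subset (ϕ : Flow ℝ M) {x : M} {C : Set M} (hC : IsCompact C)
    (h : ∀ s : ℝ, 0 ≤ s → ϕ s x ∈ C) :
    (omegaSet ϕ x).Nonempty ∧ omegaSet ϕ x ⊆ C := by
  set Z : ℝ → Set M := fun t => closure {y | ∃ s : ℝ, t ≤ s ∧ ϕ s x = y} with hZ
  have hZanti : ∀ {a b : ℝ}, a ≤ b → Z b ⊆ Z a := fun hab =>
    closure_mono (fun y ⟨s, hs, h⟩ => ⟨s, hab.trans hs, h⟩)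
  have hZsub : ∀ t : ℝ, 0 ≤ t → Z t ⊆ C := by
    intro t ht
    refine closure_minimal ?_ hC.isClosed
    rintro y ⟨s, hs, rfl⟩; exact h s (ht.trans hs)
  have : Nonempty {t : ℝ // 0 ≤ t} := ⟨⟨0, le_rfl⟩⟩
  have key : (⋂ t : {t : ℝ // 0 ≤ t}, Z t).Nonempty := by
    apply IsCompact.nonempty_iInter_of_directed_nonempty_isCompact_isClosed
    · rintro ⟨a, ha⟩ ⟨b, hb⟩
      exact ⟨⟨max a b, le_trans ha (le_max_left _ _)⟩, hZanti (le_max_left _ _),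
        hZanti (le_max_right _ _)⟩
    · rintro ⟨t, ht⟩; exact ⟨ϕ t x, subset_closure ⟨t, le_refl _, rfl⟩⟩
    · rintro ⟨t, ht⟩; exact hC.of_isClosed_subset isClosed_closure (hZsub t ht)
    · rintro ⟨t, ht⟩; exact isClosed_closure
  obtain ⟨p, hp⟩ := key
  have hpω : p ∈ omegaSet ϕ x := by
    rw [omegaSet, mem_iInter]; intro t
    exact hZanti (le_max_left t 0) (mem_iInter.mp hp ⟨max t 0, le_max_right _ _⟩)
  exact ⟨⟨p, hpω⟩, fun q hq => hZsub 0 le_rfl (mem_iInter.mp hq 0)⟩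

lemma alpha_nonempty_subset (ϕ : Flow ℝ M) {x : M} {C : Set M} (hC : IsCompact C)
    (h : ∀ s : ℝ, s ≤ 0 → ϕ s x ∈ C) :
    (alphaSet ϕ x).Nonempty ∧ alphaSet ϕ x ⊆ C := by
  set Z : ℝ → Set M := fun t => closure {y | ∃ s : ℝ, s ≤ t ∧ ϕ s x = y} with hZ
  have hZmono : ∀ {a b : ℝ}, a ≤ b → Z a ⊆ Z b := fun hab =>
    closure_mono (fun y ⟨s, hs, h⟩ => ⟨s, hs.trans hab, h⟩)
  have hZsub : ∀ t : ℝ, t ≤ 0 → Z t ⊆ C := by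
    intro t ht
    refine closure_minimal ?_ hC.isClosed
    rintro y ⟨s, hs, rfl⟩; exact h s (hs.trans ht)
  have : Nonempty {t : ℝ // t ≤ 0} := ⟨⟨0, le_rfl⟩⟩
  have key : (⋂ t : {t : ℝ // t ≤ 0}, Z t).Nonempty := by
    apply IsCompact.nonempty_iInter_of_directed_nonempty_isCompact_isClosed
    · rintro ⟨a, ha⟩ ⟨b, hb⟩
      exact ⟨⟨min a b, le_trans (min_le_left _ _) ha⟩, hZmono (min_le_left _ _),
        hZmono (min_le_right _ _)⟩
    · rintro ⟨t, ht⟩; exact ⟨ϕ t x, subset_closure ⟨t, le_refl _, rfl⟩⟩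
    · rintro ⟨t, ht⟩; exact hC.of_isClosed_subset isClosed_closure (hZsub t ht)
    · rintro ⟨t, ht⟩; exact isClosed_closure
  obtain ⟨p, hp⟩ := key
  have hpα : p ∈ alphaSet ϕ x := by
    rw [alphaSet, mem_iInter]; intro t
    exact hZmono (min_le_left t 0) (mem_iInter.mp hp ⟨min t 0, min_le_right _ _⟩)
  exact ⟨⟨p, hpα⟩, fun q hq => hZsub 0 le_rfl (mem_iInter.mp hq 0)⟩

theorem attractor_iff_no_trapped_negative_orbit
    {M : Type*} [MetricSpace M] [LocallyCompactSpace M]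
    (ϕ : Flow ℝ M) (K : Set M)
    (hKc : IsCompact K) (hKinv : flowInv ϕ K) (hproper : K ≠ Set.univ) :
    IsAttractor ϕ K ↔ ∃ U ∈ 𝓝ˢ K, ∀ z ∈ U \ K, ¬ negOrbit ϕ z ⊆ U := by
  constructor
  · rintro ⟨hstab, hB⟩
    obtain ⟨O, hOopen, hKO, hOB⟩ := mem_nhdsSet_iff_exists.mp hB
    obtain ⟨N, hNc, hKN, hNO⟩ := exists_compact_between hKc hOopen hKO
    refine ⟨N, mem_nhdsSet_iff_exists.mpr ⟨interior N, isOpen_interior, hKN, interior_subset⟩, ?_⟩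
    rintro z ⟨hzN, hzK⟩ hneg
    have hzC : ∀ s : ℝ, s ≤ 0 → ϕ s z ∈ N := fun s hs => hneg ⟨s, hs, rfl⟩
    obtain ⟨⟨p, hpα⟩, hαN⟩ := alpha_nonempty_subset ϕ hNc hzC
    have hpB : p ∈ Bplus ϕ K := hOB (hNO (hαN hpα))
    obtain ⟨⟨q, hqω⟩, hωK⟩ := hpB
    have hqα : q ∈ alphaSet ϕ z := by
      have hsub : {y | ∃ s : ℝ, 0 ≤ s ∧ ϕ s p = y} ⊆ alphaSet ϕ z := by
        rintro _ ⟨s, _, rfl⟩; exact shift_alpha ϕ hpα s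
      have hcl : IsClosed (alphaSet ϕ z) := isClosed_iInter fun _ => isClosed_closure
      exact closure_minimal hsub hcl (mem_iInter.mp hqω 0)
    have hzc : ({z}ᶜ : Set M) ∈ 𝓝ˢ K := by
      rw [mem_nhdsSet_iff_forall]
      intro k hk
      exact isOpen_compl_singleton.mem_nhds fun h => hzK (mem_singleton_iff.mp h ▸ hk)
    obtain ⟨V, hV, hVsub⟩ := hstab _ hzc
    have hVq : V ∈ 𝓝 q := mem_nhdsSet_iff_forall.mp hV q (hωK hqω)
    obtain ⟨y, hyV, s, hs, rfl⟩ := mem_closure_iff_nhds.mp (mem_iInter.mp hqα 0) V hVq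
    have hzpos : z ∈ posSat ϕ V :=
      mem_biUnion hyV ⟨-s, by linarith, by rw [← ϕ.map_add]; simp⟩
    exact hVsub hzpos rfl
  · rintro ⟨U, hU, hprop⟩
    obtain ⟨O, hOopen, hKO, hOU⟩ := mem_nhdsSet_iff_exists.mp hU
    obtain ⟨W, hWc, hKW, hWO⟩ := exists_compact_between hKc hOopen hKO
    have hWU : W ⊆ U := hWO.trans hOU
    have hWcl : IsClosed W := hWc.isClosed
    have hstab : Stable ϕ K := by
      intro A hA
      obtain ⟨OA, hOAopen, hKOA, hOAA⟩ := mem_nhdsSet_iff_exists.mp hA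
      set G := interior W ∩ OA with hGdef
      have hGopen : IsOpen G := isOpen_interior.inter hOAopen
      have hKG : K ⊆ G := subset_inter hKW hKOA
      have hGW : G ⊆ W := inter_subset_left.trans interior_subset
      have hclGW : closure G ⊆ W := hWcl.closure_subset_iff.mpr hGW
      refine ⟨{x | posOrbit ϕ x ⊆ G}, ?_, ?_⟩
      · by_contra hnot
        rw [mem_nhdsSet_iff_forall] at hnot
        push_neg at hnot
        obtain ⟨k, hk, hknb⟩ := hnot
        have hpick : ∀ n : ℕ, ∃ x, x ∈ ball k (1/(n+1)) ∩ G ∧ ∃ t, 0 ≤ t ∧ ϕ t x ∉ G := by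
          intro n
          have hb : ball k (1/(n+1)) ∩ G ∈ 𝓝 k :=
            inter_mem (ball_mem_nhds k (by positivity)) (hGopen.mem_nhds (hKG hk))
          by_contra hc
          push_neg at hc
          refine hknb (mem_of_superset hb fun x hx => ?_)
          rintro _ ⟨t, ht, rfl⟩
          exact hc x hx t ht
        choose x hx1 ht using hpick
        have hsetcl : ∀ n, IsClosed {t : ℝ | 0 ≤ t ∧ ϕ t (x n) ∉ G} := by
          intro n
          have : Continuous fun t : ℝ => ϕ t (x n) := ϕ.continuous continuous_id continuous_const
          exact isClosed_Ici.inter (hGopen.isClosed_compl.preimage this)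
        have hbdd : ∀ n, BddBelow {t : ℝ | 0 ≤ t ∧ ϕ t (x n) ∉ G} := fun n => ⟨0, fun t h => h.1⟩
        set s : ℕ → ℝ := fun n => sInf {t : ℝ | 0 ≤ t ∧ ϕ t (x n) ∉ G} with hsdef
        have hmem : ∀ n, s n ∈ {t : ℝ | 0 ≤ t ∧ ϕ t (x n) ∉ G} :=
          fun n => (hsetcl n).csInf_mem (ht n) (hbdd n)
        have hs0 : ∀ n, 0 ≤ s n := fun n => (hmem n).1
        have hbefore : ∀ n, ∀ t : ℝ, 0 ≤ t → t < s n → ϕ t (x n) ∈ G := by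
          intro n t ht0 hts
          by_contra hcc
          exact absurd (csInf_le (hbdd n) ⟨ht0, hcc⟩) (not_le.mpr hts)
        have hspos : ∀ n, 0 < s n := by
          intro n
          rcases (hs0 n).lt_or_eq with h | h
          · exact h
          · exfalso
            apply (hmem n).2
            rw [← h, ϕ.map_zero_apply]
            exact (hx1 n).2
        set y : ℕ → M := fun n => ϕ (s n) (x n) with hydef
        have hyW : ∀ n, y n ∈ W := by
          intro n
          have htd : Tendsto (fun t => ϕ t (x n)) (𝓝[<] (s n)) (𝓝 (y n)) :=
            ((ϕ.continuous continuous_id continuous_const).tendsto (s n)).mono_left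
              nhdsWithin_le_nhds
          have hio : Ioo 0 (s n) ∈ 𝓝[<] (s n) := Ioo_mem_nhdsLT_of_mem ⟨hspos n, le_rfl⟩
          have hev : ∀ᶠ t in 𝓝[<] (s n), ϕ t (x n) ∈ G := by
            filter_upwards [hio] with t htio
            exact hbefore n t htio.1.le htio.2
          exact hclGW (mem_closure_of_tendsto htd hev)
        obtain ⟨yl, hylW, g, hg, hyconv⟩ := hWc.tendsto_subseq hyW
        have hyG : yl ∉ G := by
          have : yl ∈ Gᶜ :=
            hGopen.isClosed_compl.mem_of_tendsto hyconv
              (Eventually.of_forall fun n => (hmem (g n)).2)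
          exact this
        have hyK : yl ∉ K := fun h => hyG (hKG h)
        have hxk : Tendsto x atTop (𝓝 k) := by
          rw [tendsto_iff_dist_tendsto_zero]
          exact squeeze_zero (fun n => dist_nonneg)
            (fun n => (mem_ball.mp (hx1 n).1).le) tendsto_one_div_add_atTop_nhds_zero_nat
        have hs_inf : Tendsto (fun n => s (g n)) atTop atTop := by
          by_contra hns
          rw [Filter.tendsto_atTop] at hns
          push_neg at hns
          obtain ⟨B, hB⟩ := hns
          obtain ⟨h', hh', hP⟩ := Filter.extraction_of_frequently_atTop hB
          obtain ⟨sl, hsl, h'', hh'', hsconv⟩ :=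
            (isCompact_Icc (a := (0:ℝ)) (b := B)).tendsto_subseq
              (x := fun n => s (g (h' n))) (fun n => ⟨hs0 _, (hP n).le⟩)
          have hxsub : Tendsto (fun n => x (g (h' (h'' n)))) atTop (𝓝 k) :=
            hxk.comp ((hg.comp (hh'.comp hh'')).tendsto_atTop)
          have hϕ : Tendsto (fun n => ϕ (s (g (h' (h'' n)))) (x (g (h' (h'' n)))))
              atTop (𝓝 (ϕ sl k)) :=
            (ϕ.cont'.tendsto (sl, k)).comp (hsconv.prodMk_nhds hxsub)
          have hysub : Tendsto (fun n => y (g (h' (h'' n)))) atTop (𝓝 yl) :=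
            hyconv.comp ((hh'.comp hh'').tendsto_atTop)
          have heq : yl = ϕ sl k := tendsto_nhds_unique hysub hϕ
          apply hyK
          rw [heq, ← hKinv sl]
          exact mem_image_of_mem _ hk
        have hnegW : negOrbit ϕ yl ⊆ W := by
          rintro _ ⟨r, hr, rfl⟩
          rcases hr.lt_or_eq with hr' | hr'
          · have hevW : ∀ᶠ n in atTop, ϕ r (y (g n)) ∈ W := by
              filter_upwards [hs_inf.eventually_ge_atTop (-r)] with n hn
              have hEq : ϕ r (y (g n)) = ϕ (r + s (g n)) (x (g n)) := by
                rw [ϕ.map_add]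
              rw [hEq]
              exact hGW (hbefore (g n) _ (by linarith) (by linarith))
            have hconv : Tendsto (fun n => ϕ r (y (g n))) atTop (𝓝 (ϕ r yl)) :=
              ((ϕ.continuous continuous_const continuous_id).tendsto yl).comp hyconv
            exact hWcl.mem_of_tendsto hconv hevW
          · rw [hr', ϕ.map_zero_apply]
            exact hylW
        exact hprop yl ⟨hWU hylW, hyK⟩ (hnegW.trans hWU)
      · rintro q hq
        simp only [posSat, mem_iUnion] at hq
        obtain ⟨x, hx, hqx⟩ := hq
        exact hOAA (hx hqx).2
    refine ⟨hstab, ?_⟩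
    obtain ⟨V, hV, hVsub⟩ := hstab (interior W)
      (mem_nhdsSet_iff_exists.mpr ⟨interior W, isOpen_interior, hKW, subset_rfl⟩)
    refine Filter.mem_of_superset hV ?_
    intro x hxV
    have hfwd : ∀ s : ℝ, 0 ≤ s → ϕ s x ∈ W := fun s hs =>
      interior_subset (hVsub (mem_biUnion hxV ⟨s, hs, rfl⟩))
    obtain ⟨hne, hsub⟩ := omega_nonempty_subset ϕ hWc hfwd
    refine ⟨hne, ?_⟩
    intro p hp
    by_contra hpK
    refine hprop p ⟨hWU (hsub hp), hpK⟩ ?_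
    rintro _ ⟨r, hr, rfl⟩
    exact hWU (hsub (shift_omega ϕ hp r))
end

section
/- Let M be a locally compact, connected metric space with a continuous flow θ, and K a compact, invariant, proper subset of M. Then at least one of the following holds: (I) K is an attractor; (II) K is a repeller; (III) K is isolated from minimal sets and stagnant; (IV) every neighbourhood U of K contains an entire orbit disjoint from K (i.e., there exists z with O(z) ⊆ U \ K). -/
open Set Filter Metric Topology TopologicalSpace

variable {M : Type*} [MetricSpace M]

section Aux

lemma rev_apply (ϕ : Flow ℝ M) (t : ℝ) (x : M) : ϕ.reverse t x = ϕ (-t) x := rfl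

lemma orbit_reverse (ϕ : Flow ℝ M) (z : M) : orbit ϕ.reverse z = orbit ϕ z := by
  unfold orbit
  ext y
  constructor <;> rintro ⟨t, rfl⟩
  · exact ⟨-t, rfl⟩
  · exact ⟨-t, by simp [rev_apply]⟩

lemma alpha_eq_omega_rev (ϕ : Flow ℝ M) (x : M) :
    alphaSet ϕ x = omegaSet ϕ.reverse x := by
  unfold alphaSet omegaSet
  have h1 : ∀ t : ℝ, {y | ∃ s : ℝ, t ≤ s ∧ ϕ.reverse s x = y}
      = {y | ∃ s : ℝ, s ≤ -t ∧ ϕ s x = y} := by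
    intro t; ext y; constructor
    · rintro ⟨s, hs, rfl⟩; exact ⟨-s, by linarith, rfl⟩
    · rintro ⟨s, hs, rfl⟩; exact ⟨-s, by linarith, by simp [rev_apply]⟩
  calc (⋂ t : ℝ, closure {y | ∃ s : ℝ, s ≤ t ∧ ϕ s x = y})
      = ⋂ t : ℝ, closure {y | ∃ s : ℝ, s ≤ -t ∧ ϕ s x = y} :=
        (Function.Surjective.iInter_comp neg_surjective
          (fun t => closure {y | ∃ s : ℝ, s ≤ t ∧ ϕ s x = y})).symm
    _ = _ := by simp_rw [h1]

lemma omega_props (ϕ : Flow ℝ M) (N : Set M) (hN : IsCompact N) (x : M)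
    (hx : ∀ t : ℝ, 0 ≤ t → ϕ t x ∈ N) :
    (omegaSet ϕ x).Nonempty ∧ omegaSet ϕ x ⊆ N ∧
      ∀ z ∈ omegaSet ϕ x, ∀ t : ℝ, ϕ t z ∈ omegaSet ϕ x := by
  set tail : ℝ → Set M := fun a => {y | ∃ s : ℝ, a ≤ s ∧ ϕ s x = y} with htail
  have htail_mono : ∀ {a b : ℝ}, a ≤ b → tail b ⊆ tail a := by
    rintro a b hab y ⟨s, hs, rfl⟩; exact ⟨s, hab.trans hs, rfl⟩
  have htailN : ∀ a : ℝ, 0 ≤ a → tail a ⊆ N := by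
    rintro a ha y ⟨s, hs, rfl⟩; exact hx s (ha.trans hs)
  have hclN : ∀ a : ℝ, 0 ≤ a → closure (tail a) ⊆ N := fun a ha =>
    closure_minimal (htailN a ha) hN.isClosed
  have hsubN : omegaSet ϕ x ⊆ N := fun z hz =>
    hclN 0 le_rfl (mem_iInter.1 hz 0)
  refine ⟨?_, hsubN, ?_⟩
  · have h2 : (⋂ n : ℕ, closure (tail n)).Nonempty := by
      refine IsCompact.nonempty_iInter_of_sequence_nonempty_isCompact_isClosed
        (fun n => closure (tail n))
        (fun n => closure_mono (htail_mono (by exact_mod_cast n.le_succ)))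
        (fun n => ⟨ϕ n x, subset_closure ⟨n, le_rfl, rfl⟩⟩)
        (hN.of_isClosed_subset isClosed_closure (hclN ((0:ℕ):ℝ) (by norm_num)))
        (fun n => isClosed_closure)
    obtain ⟨z, hz⟩ := h2
    refine ⟨z, mem_iInter.2 fun t => ?_⟩
    obtain ⟨n, hn⟩ := exists_nat_ge t
    exact closure_mono (htail_mono hn) (mem_iInter.1 hz n)
  · intro z hz t
    refine mem_iInter.2 fun a => ?_
    have hz' : z ∈ closure (tail (a - t)) := mem_iInter.1 hz (a - t)
    have hmap : MapsTo (fun y => ϕ t y) (tail (a - t)) (tail a) := by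
      rintro y ⟨s, hs, rfl⟩
      exact ⟨t + s, by linarith, ϕ.map_add t s x⟩
    exact map_mem_closure (ϕ.continuous_toFun t) hz' hmap

lemma inv_subset_K (ϕ : Flow ℝ M) {K N U₀ : Set M}
    (hbw : ∀ (t : ℝ) (x : M), ϕ t x ∈ K → x ∈ K) (hNU : N ⊆ U₀)
    (hiso : ∀ z : M, ¬ orbit ϕ z ⊆ U₀ \ K)
    {S : Set M} (hSN : S ⊆ N) (hSinv : ∀ z ∈ S, ∀ t : ℝ, ϕ t z ∈ S) : S ⊆ K := by
  intro z hz
  by_contra hzK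
  refine hiso z ?_
  rintro _ ⟨t, rfl⟩
  exact ⟨hNU (hSN (hSinv z hz t)), fun hmem => hzK (hbw t z hmem)⟩

lemma key (ϕ : Flow ℝ M) (K N : Set M) (hK : IsCompact K)
    (hfw : ∀ (t : ℝ) (x : M), x ∈ K → ϕ t x ∈ K) (hN : IsCompact N)
    (hKN : K ⊆ interior N)
    (hV : {x | ∀ t : ℝ, 0 ≤ t → ϕ t x ∈ N} ∉ 𝓝ˢ K) :
    ∃ y, y ∈ N ∧ y ∉ K ∧ ∀ t : ℝ, t ≤ 0 → ϕ t y ∈ N := by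
  have hstep : ∀ T : ℝ, 0 ≤ T →
      ∃ y, y ∈ N ∧ y ∉ interior N ∧ ∀ t : ℝ, -T ≤ t → t ≤ 0 → ϕ t y ∈ N := by
    intro T hT
    have hopen : IsOpen {p : ℝ × M | ϕ p.1 p.2 ∈ interior N} :=
      isOpen_interior.preimage ϕ.cont'
    have hsub : (Icc (0:ℝ) T) ×ˢ K ⊆ {p : ℝ × M | ϕ p.1 p.2 ∈ interior N} := by
      rintro ⟨t, x⟩ ⟨_, hxK⟩
      exact hKN (hfw t x hxK)
    obtain ⟨u, v, hu, hv, hTu, hKv, huv⟩ := generalized_tube_lemma isCompact_Icc hK hopen hsub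
    obtain ⟨δ, hδ, hδv⟩ := hK.exists_thickening_subset_open hv hKv
    have htube : ∀ x ∈ thickening δ K, ∀ s : ℝ, 0 ≤ s → s ≤ T → ϕ s x ∈ interior N := by
      intro x hx s h0 hsT
      exact huv (mk_mem_prod (hTu ⟨h0, hsT⟩) (hδv hx))
    have hthick : thickening δ K ∈ 𝓝ˢ K :=
      isOpen_thickening.mem_nhdsSet.2 (self_subset_thickening hδ K)
    have hnsub : ¬ thickening δ K ⊆ {x | ∀ t : ℝ, 0 ≤ t → ϕ t x ∈ N} :=
      fun hss => hV (mem_of_superset hthick hss)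
    obtain ⟨x, hxδ, hxV⟩ := Set.not_subset.1 hnsub
    simp only [mem_setOf_eq, not_forall] at hxV
    obtain ⟨t₀, ht₀, hxt₀⟩ := hxV
    set S := {s : ℝ | 0 ≤ s ∧ ϕ s x ∉ N} with hS
    have hSne : S.Nonempty := ⟨t₀, ht₀, hxt₀⟩
    have hSbdd : BddBelow S := ⟨0, fun s hs => hs.1⟩
    set τ := sInf S with hτ
    have hτ_lb : ∀ s ∈ S, τ ≤ s := fun s hs => csInf_le hSbdd hs
    have hTs : ∀ s ∈ S, T < s := by
      intro s hs
      by_contra hc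
      push_neg at hc
      exact hs.2 (interior_subset (htube x hxδ s hs.1 hc))
    have hτT : T ≤ τ := le_csInf hSne fun s hs => (hTs s hs).le
    have hτ0 : 0 ≤ τ := hT.trans hτT
    have hcont : Continuous fun s : ℝ => ϕ s x :=
      ϕ.cont'.comp (continuous_id.prodMk continuous_const)
    have hIco : ∀ s : ℝ, 0 ≤ s → s < τ → ϕ s x ∈ N := by
      intro s h0 hlt
      by_contra hns
      exact absurd (hτ_lb s ⟨h0, hns⟩) (not_le.2 hlt)
    have hyN : ϕ τ x ∈ N := by
      rcases eq_or_lt_of_le hτ0 with h0' | hpos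
      · exact interior_subset (htube x hxδ τ hτ0 (by rw [← h0']; exact hT))
      · have hmem : τ ∈ closure (Ico (0:ℝ) τ) := by
          rw [closure_Ico (ne_of_lt hpos)]
          exact ⟨hτ0, le_rfl⟩
        have := map_mem_closure (t := N) hcont hmem fun r hr => hIco r hr.1 hr.2
        rwa [hN.isClosed.closure_eq] at this
    have hIcc : ∀ s : ℝ, 0 ≤ s → s ≤ τ → ϕ s x ∈ N := by
      intro s h0 hle
      rcases lt_or_eq_of_le hle with hlt | heq
      · exact hIco s h0 hlt
      · rw [heq]; exact hyN
    have hyint : ϕ τ x ∉ interior N := by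
      intro hint
      have hnb : {s : ℝ | ϕ s x ∈ interior N} ∈ 𝓝 τ :=
        (hcont.isOpen_preimage _ isOpen_interior).mem_nhds hint
      obtain ⟨ε, hε, hball⟩ := Metric.mem_nhds_iff.1 hnb
      have hlb : ∀ s ∈ S, τ + ε ≤ s := by
        intro s hs
        by_contra hc
        push_neg at hc
        have habs : |s - τ| < ε := by
          rw [abs_lt]; constructor <;> [linarith [hτ_lb s hs]; linarith]
        have : ϕ s x ∈ interior N := hball (by simpa [Real.dist_eq] using habs)
        exact hs.2 (interior_subset this)
      have := le_csInf hSne hlb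
      linarith
    refine ⟨ϕ τ x, hyN, hyint, fun t htT ht0 => ?_⟩
    have heq : ϕ t (ϕ τ x) = ϕ (t + τ) x := (ϕ.map_add t τ x).symm
    rw [heq]
    exact hIcc (t + τ) (by linarith) (by linarith)
  set F : ℕ → Set M := fun n =>
    (N ∩ (interior N)ᶜ) ∩ ⋂ t ∈ Icc (-(n:ℝ)) 0, (fun y => ϕ t y) ⁻¹' N with hF
  have hFmem : ∀ n : ℕ, ∀ y, y ∈ F n ↔
      (y ∈ N ∧ y ∉ interior N) ∧ ∀ t : ℝ, -(n:ℝ) ≤ t → t ≤ 0 → ϕ t y ∈ N := by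
    intro n y
    simp [hF, mem_iInter, and_imp]
  have hne : ∀ n : ℕ, (F n).Nonempty := by
    intro n
    obtain ⟨y, h1, h2, h3⟩ := hstep n n.cast_nonneg
    exact ⟨y, (hFmem n y).2 ⟨⟨h1, h2⟩, h3⟩⟩
  have hdec : ∀ n : ℕ, F (n + 1) ⊆ F n := by
    intro n y hy
    rw [hFmem] at hy ⊢
    refine ⟨hy.1, fun t ht1 ht2 => hy.2 t (by push_cast; linarith) ht2⟩
  have hclosed : ∀ n : ℕ, IsClosed (F n) :=
    fun n => ((hN.isClosed.inter (isClosed_compl_iff.2 isOpen_interior)).inter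
      (isClosed_biInter fun t _ => hN.isClosed.preimage (ϕ.continuous_toFun t)))
  have hcomp : IsCompact (F 0) :=
    hN.of_isClosed_subset (hclosed 0) fun y hy => ((hFmem 0 y).1 hy).1.1
  obtain ⟨y, hy⟩ :=
    IsCompact.nonempty_iInter_of_sequence_nonempty_isCompact_isClosed F hdec hne hcomp hclosed
  have hy' := fun n => (hFmem n y).1 (mem_iInter.1 hy n)
  refine ⟨y, (hy' 0).1.1, fun hyK => (hy' 0).1.2 (hKN hyK), fun t ht => ?_⟩
  obtain ⟨n, hn⟩ := exists_nat_ge (-t)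
  exact (hy' n).2 t (by linarith) ht

lemma attractor_case [LocallyCompactSpace M] (ϕ : Flow ℝ M) (K N U₀ : Set M)
    (hK : IsCompact K)
    (hfw : ∀ (t : ℝ) (x : M), x ∈ K → ϕ t x ∈ K)
    (hbw : ∀ (t : ℝ) (x : M), ϕ t x ∈ K → x ∈ K)
    (hN : IsCompact N) (hKN : K ⊆ interior N) (hNU : N ⊆ U₀)
    (hiso : ∀ z : M, ¬ orbit ϕ z ⊆ U₀ \ K)
    (h : ∀ x : M, (∀ t : ℝ, t ≤ 0 → ϕ t x ∈ N) → x ∈ K) :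
    IsAttractor ϕ K := by
  have main : ∀ N' : Set M, IsCompact N' → K ⊆ interior N' → N' ⊆ N →
      {x | ∀ t : ℝ, 0 ≤ t → ϕ t x ∈ N'} ∈ 𝓝ˢ K := by
    intro N' hN' hKN' hN'N
    by_contra hV
    obtain ⟨y, _, hyK, hy⟩ := key ϕ K N' hK hfw hN' hKN' hV
    exact hyK (h y fun t ht => hN'N (hy t ht))
  constructor
  · intro U hU
    obtain ⟨O, hO, hKO, hOU⟩ := mem_nhdsSet_iff_exists.1 hU
    obtain ⟨N', hN', hKN', hN'O⟩ :=
      exists_compact_between hK (hO.inter isOpen_interior) (subset_inter hKO hKN)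
    refine ⟨{x | ∀ t : ℝ, 0 ≤ t → ϕ t x ∈ N'},
      main N' hN' hKN' (fun y hy => interior_subset (hN'O hy).2), ?_⟩
    rintro y hy
    simp only [posSat, posOrbit, mem_iUnion, mem_setOf_eq] at hy
    obtain ⟨x, hx, t, ht, rfl⟩ := hy
    exact hOU (hN'O (hx t ht)).1
  · refine mem_of_superset (main N hN hKN subset_rfl) ?_
    intro x hx
    obtain ⟨hne, hsub, hinv⟩ := omega_props ϕ N hN x hx
    exact ⟨hne, inv_subset_K ϕ hbw hNU hiso hsub fun z hz t => hinv z hz t⟩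

theorem ura_kimura_bhatia
    {M : Type*} [MetricSpace M] [LocallyCompactSpace M] [ConnectedSpace M]
    (ϕ : Flow ℝ M) (K : Set M)
    (hKc : IsCompact K) (hKinv : flowInv ϕ K) (hproper : K ≠ Set.univ) :
    IsAttractor ϕ K ∨ IsRepeller ϕ K ∨
      (IsolatedFromMinimals ϕ K ∧ Stagnant ϕ K) ∨
      ∀ U ∈ 𝓝ˢ K, ∃ z : M, orbit ϕ z ⊆ U \ K := by
  by_cases hIV : ∀ U ∈ 𝓝ˢ K, ∃ z : M, orbit ϕ z ⊆ U \ K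
  · exact Or.inr (Or.inr (Or.inr hIV))
  push_neg at hIV
  obtain ⟨U₀, hU₀mem, hU₀⟩ := hIV
  obtain ⟨O, hO, hKO, hOU⟩ := mem_nhdsSet_iff_exists.1 hU₀mem
  obtain ⟨N, hN, hKN, hNO⟩ := exists_compact_between hKc hO hKO
  have hNU : N ⊆ U₀ := hNO.trans hOU
  have hfw : ∀ (t : ℝ) (x : M), x ∈ K → ϕ t x ∈ K := by
    intro t x hx
    rw [← hKinv t]
    exact ⟨x, hx, rfl⟩
  have hbw : ∀ (t : ℝ) (x : M), ϕ t x ∈ K → x ∈ K := by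
    intro t x hx
    have := hfw (-t) _ hx
    rwa [← ϕ.map_add, neg_add_cancel, ϕ.map_zero_apply] at this
  have hfw' : ∀ (t : ℝ) (x : M), x ∈ K → ϕ.reverse t x ∈ K := fun t x hx => hfw (-t) x hx
  have hbw' : ∀ (t : ℝ) (x : M), ϕ.reverse t x ∈ K → x ∈ K := fun t x hx => hbw (-t) x hx
  have hiso' : ∀ z : M, ¬ orbit ϕ.reverse z ⊆ U₀ \ K := fun z hsub =>
    hU₀ z (by rwa [orbit_reverse] at hsub)
  by_cases hp : ∀ x : M, (∀ t : ℝ, 0 ≤ t → ϕ t x ∈ N) → x ∈ K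
  · refine Or.inr (Or.inl ?_)
    refine attractor_case ϕ.reverse K N U₀ hKc hfw' hbw' hN hKN hNU hiso' ?_
    intro x hx
    refine hp x fun t ht => ?_
    have := hx (-t) (by linarith)
    rwa [rev_apply, neg_neg] at this
  by_cases hm : ∀ x : M, (∀ t : ℝ, t ≤ 0 → ϕ t x ∈ N) → x ∈ K
  · exact Or.inl (attractor_case ϕ K N U₀ hKc hfw hbw hN hKN hNU hU₀ hm)
  · push_neg at hp hm
    obtain ⟨y, hyN, hyK⟩ := hp
    obtain ⟨x, hxN, hxK⟩ := hm
    refine Or.inr (Or.inr (Or.inl ⟨?_, ?_⟩))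
    · refine ⟨interior N, isOpen_interior.mem_nhdsSet.2 hKN, fun s hs hmin => ?_⟩
      obtain ⟨⟨z, hz⟩, _, hsinv, _⟩ := hmin
      refine hU₀ z ?_
      rintro _ ⟨t, rfl⟩
      have hzs : ϕ t z ∈ s := by
        rw [← hsinv t]
        exact ⟨z, hz, rfl⟩
      have h2 := hs hzs
      exact ⟨hNU (interior_subset h2.1), h2.2⟩
    · have hxrev : ∀ t : ℝ, 0 ≤ t → ϕ.reverse t x ∈ N := fun t ht =>
        hxN (-t) (by linarith)
      obtain ⟨hαne, hαsub, hαinv⟩ := omega_props ϕ.reverse N hN x hxrev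
      obtain ⟨hωne, hωsub, hωinv⟩ := omega_props ϕ N hN y hyN
      have hαK : omegaSet ϕ.reverse x ⊆ K :=
        inv_subset_K ϕ.reverse hbw' hNU hiso' hαsub fun z hz t => hαinv z hz t
      have hωK : omegaSet ϕ y ⊆ K :=
        inv_subset_K ϕ hbw hNU hU₀ hωsub fun z hz t => hωinv z hz t
      refine ⟨x, hxK, y, hyK, ?_, ?_, hωne, hωK⟩
      · rw [alpha_eq_omega_rev]; exact hαne
      · rw [alpha_eq_omega_rev]; exact hαK
end Aux
end

section
/- Let M be a locally compact metric space with a continuous flow θ, and X a nonempty, compact, invariant, proper subset of M. Suppose X is non-stagnant (i.e., it is not the case that there exist x, y ∈ M \ X with ∅ ≠ α(x) ⊆ X and ∅ ≠ ω(y) ⊆ X). If z ∈ A⁺(X) (i.e., ω(z) intersects both X and M \ X), then for every neighbourhood U of X there exists y ∈ ω(z) with the full orbit O(y) ⊆ U \ X. -/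
open Set Filter Metric Topology TopologicalSpace

variable {M : Type*} [MetricSpace M]

namespace NSAux

/-- tail set of the forward orbit -/
def tailSet (ϕ : Flow ℝ M) (x : M) (t : ℝ) : Set M := {y | ∃ s : ℝ, t ≤ s ∧ ϕ s x = y}

lemma omegaSet_eq (ϕ : Flow ℝ M) (x : M) :
    omegaSet ϕ x = ⋂ t : ℝ, closure (tailSet ϕ x t) := rfl

lemma isClosed_omegaSet (ϕ : Flow ℝ M) (x : M) : IsClosed (omegaSet ϕ x) :=
  isClosed_iInter fun _ => isClosed_closure

lemma omegaSet_subset_tail (ϕ : Flow ℝ M) (x : M) (t : ℝ) :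
    omegaSet ϕ x ⊆ closure (tailSet ϕ x t) := iInter_subset _ t

lemma tailSet_mono (ϕ : Flow ℝ M) (x : M) {s t : ℝ} (h : s ≤ t) :
    tailSet ϕ x t ⊆ tailSet ϕ x s := fun _ ⟨r, hr, he⟩ => ⟨r, h.trans hr, he⟩

lemma image_tailSet (ϕ : Flow ℝ M) (x : M) (r t : ℝ) :
    ϕ r '' tailSet ϕ x t = tailSet ϕ x (t + r) := by
  ext y
  constructor
  · rintro ⟨w, ⟨s, hs, rfl⟩, rfl⟩
    exact ⟨r + s, by linarith, ϕ.map_add r s x⟩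
  · rintro ⟨s, hs, rfl⟩
    exact ⟨ϕ (s - r) x, ⟨s - r, by linarith, rfl⟩, by
      rw [← ϕ.map_add]; ring_nf⟩

lemma flowInv_omegaSet (ϕ : Flow ℝ M) (x : M) : flowInv ϕ (omegaSet ϕ x) := by
  have hsub : ∀ r : ℝ, ϕ r '' omegaSet ϕ x ⊆ omegaSet ϕ x := by
    intro r y hy
    obtain ⟨w, hw, rfl⟩ := hy
    rw [omegaSet_eq] at hw ⊢
    rw [mem_iInter] at hw ⊢
    intro t
    have h1 : ϕ r w ∈ closure (ϕ r '' tailSet ϕ x (t - r)) :=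
      image_closure_subset_closure_image (ϕ.continuous_toFun r) ⟨w, hw (t - r), rfl⟩
    rwa [image_tailSet, sub_add_cancel] at h1
  intro r
  refine Subset.antisymm (hsub r) fun y hy => ?_
  refine ⟨ϕ (-r) y, hsub (-r) ⟨y, hy, rfl⟩, ?_⟩
  rw [← ϕ.map_add, add_neg_cancel, ϕ.map_zero_apply]

lemma mem_omegaSet_of_tendsto (ϕ : Flow ℝ M) {x u : M} {c : ℕ → ℝ}
    (hc : Tendsto c atTop atTop)
    (hlim : Tendsto (fun n => ϕ (c n) x) atTop (𝓝 u)) : u ∈ omegaSet ϕ x := by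
  rw [omegaSet_eq, mem_iInter]
  intro t
  refine mem_closure_of_tendsto hlim ?_
  filter_upwards [hc.eventually_ge_atTop t] with n hn
  exact ⟨c n, hn, rfl⟩

lemma flowInv.mem (ϕ : Flow ℝ M) {S : Set M} (hS : flowInv ϕ S) {x : M} (hx : x ∈ S) (t : ℝ) :
    ϕ t x ∈ S := by rw [← hS t]; exact ⟨x, hx, rfl⟩

lemma flowInv.mem_of (ϕ : Flow ℝ M) {S : Set M} (hS : flowInv ϕ S) {x : M} {t : ℝ}
    (hx : ϕ t x ∈ S) : x ∈ S := by
  have := flowInv.mem ϕ hS hx (-t)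
  rwa [← ϕ.map_add, neg_add_cancel, ϕ.map_zero_apply] at this

lemma flowInv.reverse (ϕ : Flow ℝ M) {S : Set M} (hS : flowInv ϕ S) :
    flowInv ϕ.reverse S := fun t => hS (-t)

lemma omegaSet_subset_of_invariant (ϕ : Flow ℝ M) {S : Set M} (hScl : IsClosed S)
    (hSinv : flowInv ϕ S) {u : M} (hu : u ∈ S) : omegaSet ϕ u ⊆ S := by
  refine (omegaSet_subset_tail ϕ u 0).trans ?_
  rw [← hScl.closure_eq]
  refine closure_mono ?_
  rintro y ⟨s, _, rfl⟩
  exact flowInv.mem ϕ hSinv hu s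

lemma omegaSet_nonempty_subset (ϕ : Flow ℝ M) {N : Set M} (hNc : IsCompact N) {u : M}
    (h : ∀ t : ℝ, 0 ≤ t → ϕ t u ∈ N) :
    (omegaSet ϕ u).Nonempty ∧ omegaSet ϕ u ⊆ N := by
  have htail : ∀ t : ℝ, 0 ≤ t → tailSet ϕ u t ⊆ N := by
    rintro t ht y ⟨s, hs, rfl⟩; exact h s (ht.trans hs)
  have hsubN : omegaSet ϕ u ⊆ N := by
    refine (omegaSet_subset_tail ϕ u 0).trans ?_
    rw [← hNc.isClosed.closure_eq]
    exact closure_mono (htail 0 le_rfl)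
  refine ⟨?_, hsubN⟩
  set F : ℝ → Set M := fun t => closure (tailSet ϕ u (max t 0)) with hF
  have hFsub : ∀ t, F t ⊆ N := fun t => by
    rw [← hNc.isClosed.closure_eq]
    exact closure_mono (htail _ (le_max_right _ _))
  have hne : (⋂ t, F t).Nonempty := by
    apply IsCompact.nonempty_iInter_of_directed_nonempty_isCompact_isClosed
    · intro s t
      refine ⟨max s t, closure_mono (tailSet_mono ϕ u ?_), closure_mono (tailSet_mono ϕ u ?_)⟩
      · exact max_le_max (le_max_left _ _) le_rfl
      · exact max_le_max (le_max_right _ _) le_rfl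
    · intro t
      exact ⟨ϕ (max t 0) u, subset_closure ⟨max t 0, le_rfl, rfl⟩⟩
    · intro t
      exact hNc.of_isClosed_subset isClosed_closure (hFsub t)
    · intro t; exact isClosed_closure
  obtain ⟨y, hy⟩ := hne
  refine ⟨y, ?_⟩
  rw [omegaSet_eq, mem_iInter]
  intro t
  have := mem_iInter.mp hy t
  exact closure_mono (tailSet_mono ϕ u (le_max_left _ _)) this

lemma alphaSet_eq_reverse (ϕ : Flow ℝ M) (x : M) :
    alphaSet ϕ x = omegaSet ϕ.reverse x := by
  ext y
  rw [alphaSet, omegaSet, mem_iInter, mem_iInter]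
  constructor
  · intro h t
    have := h (-t)
    convert this using 2
    ext w
    constructor
    · rintro ⟨s, hs, rfl⟩
      exact ⟨-s, by linarith, rfl⟩
    · rintro ⟨s, hs, rfl⟩
      exact ⟨-s, by linarith, by simp [Flow.reverse]⟩
  · intro h t
    have := h (-t)
    convert this using 2
    ext w
    constructor
    · rintro ⟨s, hs, rfl⟩
      exact ⟨-s, by linarith, by simp [Flow.reverse]⟩
    · rintro ⟨s, hs, rfl⟩
      refine ⟨-s, by linarith, rfl⟩

lemma reverse_apply (ϕ : Flow ℝ M) (t : ℝ) (x : M) : ϕ.reverse t x = ϕ (-t) x := rfl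

end NSAux

namespace NSAux

lemma flowInv.of_reverse (ϕ : Flow ℝ M) {S : Set M} (h : flowInv ϕ.reverse S) :
    flowInv ϕ S := fun t => by
  have := h (-t)
  have e : ϕ.reverse (-t) = ϕ t := funext fun x => by rw [reverse_apply, neg_neg]
  rwa [e] at this

lemma gap_tendsto (ϕ : Flow ℝ M) {z w₁ w₂ : M} {g h : ℕ → ℝ}
    (hgh : ∀ k, g k ≤ h k)
    (h₁ : Tendsto (fun k => ϕ (g k) z) atTop (𝓝 w₁))
    (h₂ : Tendsto (fun k => ϕ (h k) z) atTop (𝓝 w₂))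
    (hno : ∀ s : ℝ, ϕ s w₁ ≠ w₂) :
    Tendsto (fun k => h k - g k) atTop atTop := by
  by_contra hcon
  rw [Filter.tendsto_atTop] at hcon
  push_neg at hcon
  obtain ⟨B, hB⟩ := hcon
  have hB : ∃ᶠ k in atTop, ¬ (B ≤ h k - g k) := hB.mono fun k hk => not_le.mpr hk
  have hB' : ∃ᶠ k in atTop, h k - g k < B := hB.mono fun k hk => not_le.mp hk
  obtain ⟨ρ, hρ, hρB⟩ := extraction_of_frequently_atTop hB'
  have hmem : ∀ j, h (ρ j) - g (ρ j) ∈ Icc (0 : ℝ) B := fun j =>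
    ⟨sub_nonneg.mpr (hgh _), (hρB j).le⟩
  obtain ⟨s, _, ρ', hρ', hslim⟩ := isCompact_Icc.tendsto_subseq hmem
  have h₁' : Tendsto (fun j => ϕ (g (ρ (ρ' j))) z) atTop (𝓝 w₁) :=
    h₁.comp (hρ.comp hρ').tendsto_atTop
  have h₂' : Tendsto (fun j => ϕ (h (ρ (ρ' j))) z) atTop (𝓝 w₂) :=
    h₂.comp (hρ.comp hρ').tendsto_atTop
  have heq : ∀ j, ϕ (h (ρ (ρ' j))) z
      = ϕ (h (ρ (ρ' j)) - g (ρ (ρ' j))) (ϕ (g (ρ (ρ' j))) z) := by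
    intro j
    rw [← ϕ.map_add, sub_add_cancel]
  have hcomb : Tendsto (fun j => ϕ (h (ρ (ρ' j)) - g (ρ (ρ' j))) (ϕ (g (ρ (ρ' j))) z))
      atTop (𝓝 (ϕ s w₁)) := by
    have hp : Tendsto (fun j => ((h (ρ (ρ' j)) - g (ρ (ρ' j))), ϕ (g (ρ (ρ' j))) z))
        atTop (𝓝 (s, w₁)) := by
      refine Tendsto.prodMk_nhds ?_ h₁'
      exact hslim
    exact (ϕ.cont'.tendsto (s, w₁)).comp hp
  have h₂'' := (tendsto_congr heq).mp h₂'
  exact hno s (tendsto_nhds_unique hcomb h₂'')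

end NSAux

theorem orbit_in_omega_near_nonstagnant
    {M : Type*} [MetricSpace M] [LocallyCompactSpace M]
    (ϕ : Flow ℝ M) (X : Set M)
    (hXne : X.Nonempty) (hXc : IsCompact X) (hXinv : flowInv ϕ X)
    (hproper : X ≠ Set.univ) (hns : ¬ Stagnant ϕ X)
    (z : M) (hz₁ : (omegaSet ϕ z ∩ X).Nonempty) (hz₂ : ¬ omegaSet ϕ z ⊆ X) :
    ∀ U ∈ 𝓝ˢ X, ∃ y ∈ omegaSet ϕ z, orbit ϕ y ⊆ U \ X := by
  intro U hU
  by_contra hcon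
  obtain ⟨p, hpω, hpX⟩ := hz₁
  obtain ⟨q, hqω, hqX⟩ := not_subset.mp hz₂
  obtain ⟨V, hVo, hXV, hVU⟩ := mem_nhdsSet_iff_exists.mp hU
  have hV'o : IsOpen (V \ {q}) := hVo.sdiff isClosed_singleton
  have hXV' : X ⊆ V \ {q} := fun x hx =>
    ⟨hXV hx, fun hxq => hqX (mem_singleton_iff.mp hxq ▸ hx)⟩
  obtain ⟨N, hNc, hXiN, hNV'⟩ := exists_compact_between hXc hV'o hXV'
  have hNU : N ⊆ U := fun x hx => hVU (hNV' hx).1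
  have hqN : q ∉ N := fun h => (hNV' h).2 rfl
  have hNcl : IsClosed N := hNc.isClosed
  have hcz : Continuous fun t : ℝ => ϕ t z := ϕ.continuous continuous_id continuous_const
  -- times when the orbit of z is outside N / deep inside near p
  have hpiN : interior N ∈ 𝓝 p := isOpen_interior.mem_nhds (hXiN hpX)
  have hqc : Nᶜ ∈ 𝓝 q := hNcl.isOpen_compl.mem_nhds hqN
  have hqtimes : ∀ T : ℝ, ∃ s, T ≤ s ∧ ϕ s z ∉ N := by
    intro T
    have h1 := NSAux.omegaSet_subset_tail ϕ z T hqω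
    rw [mem_closure_iff_nhds] at h1
    obtain ⟨y, hy1, s, hs, rfl⟩ := h1 _ hqc
    exact ⟨s, hs, hy1⟩
  have hptimes : ∀ T δ : ℝ, 0 < δ →
      ∃ s, T ≤ s ∧ ϕ s z ∈ interior N ∧ dist (ϕ s z) p < δ := by
    intro T δ hδ
    have h1 := NSAux.omegaSet_subset_tail ϕ z T hpω
    rw [mem_closure_iff_nhds] at h1
    obtain ⟨y, hy1, s, hs, rfl⟩ := h1 _ (inter_mem hpiN (ball_mem_nhds p hδ))
    exact ⟨s, hs, hy1.1, hy1.2⟩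
  have hseqs : ∀ n : ℕ, ∃ bb aa bb' : ℝ, (n : ℝ) ≤ bb ∧ bb ≤ aa ∧ aa ≤ bb' ∧
      ϕ bb z ∉ N ∧ ϕ aa z ∈ interior N ∧ dist (ϕ aa z) p < 1 / ((n : ℝ) + 1) ∧
      ϕ bb' z ∉ N := by
    intro n
    obtain ⟨bb, hb1, hb2⟩ := hqtimes n
    obtain ⟨aa, ha1, ha2, ha3⟩ := hptimes bb (1 / ((n : ℝ) + 1)) (by positivity)
    obtain ⟨bb', hb'1, hb'2⟩ := hqtimes aa
    exact ⟨bb, aa, bb', hb1, ha1, hb'1, hb2, ha2, ha3, hb'2⟩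
  choose b a b' hnb hba hab' hbN haiN hap hb'N using hseqs
  -- entry/exit times
  set Sc : ℕ → Set ℝ := fun n =>
    Icc (b n) (a n) ∩ (fun t => ϕ t z) ⁻¹' (interior N)ᶜ with hScdef
  set Sd : ℕ → Set ℝ := fun n =>
    Icc (a n) (b' n) ∩ (fun t => ϕ t z) ⁻¹' (interior N)ᶜ with hSddef
  have hSccl : ∀ n, IsClosed (Sc n) := fun n =>
    isClosed_Icc.inter (isOpen_interior.isClosed_compl.preimage hcz)
  have hSdcl : ∀ n, IsClosed (Sd n) := fun n =>
    isClosed_Icc.inter (isOpen_interior.isClosed_compl.preimage hcz)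
  have hScne : ∀ n, (Sc n).Nonempty := fun n =>
    ⟨b n, ⟨le_rfl, hba n⟩, fun h => hbN n (interior_subset h)⟩
  have hSdne : ∀ n, (Sd n).Nonempty := fun n =>
    ⟨b' n, ⟨hab' n, le_rfl⟩, fun h => hb'N n (interior_subset h)⟩
  have hScbdd : ∀ n, BddAbove (Sc n) := fun n => bddAbove_Icc.mono inter_subset_left
  have hSdbdd : ∀ n, BddBelow (Sd n) := fun n => bddBelow_Icc.mono inter_subset_left
  set c : ℕ → ℝ := fun n => sSup (Sc n) with hcdef
  set d : ℕ → ℝ := fun n => sInf (Sd n) with hddef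
  have hcSc : ∀ n, c n ∈ Sc n := fun n => (hSccl n).csSup_mem (hScne n) (hScbdd n)
  have hdSd : ∀ n, d n ∈ Sd n := fun n => (hSdcl n).csInf_mem (hSdne n) (hSdbdd n)
  have hcmem : ∀ n, ϕ (c n) z ∉ interior N := fun n => (hcSc n).2
  have hdmem : ∀ n, ϕ (d n) z ∉ interior N := fun n => (hdSd n).2
  have hcb : ∀ n, b n ≤ c n := fun n => (hcSc n).1.1
  have hdb' : ∀ n, d n ≤ b' n := fun n => (hdSd n).1.2
  have hca : ∀ n, c n < a n := fun n =>
    lt_of_le_of_ne (hcSc n).1.2 fun h => hcmem n (by rw [h]; exact haiN n)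
  have had : ∀ n, a n < d n := fun n =>
    lt_of_le_of_ne (hdSd n).1.1 fun h => hdmem n (by rw [← h]; exact haiN n)
  have hcd : ∀ n, c n < d n := fun n => (hca n).trans (had n)
  have hmid : ∀ n, ∀ t, c n < t → t < d n → ϕ t z ∈ interior N := by
    intro n t h1 h2
    by_contra hni
    rcases le_total t (a n) with h | h
    · have ht : t ∈ Sc n := ⟨⟨(hcb n).trans h1.le, h⟩, hni⟩
      exact absurd (le_csSup (hScbdd n) ht) (not_le.mpr h1)
    · have ht : t ∈ Sd n := ⟨⟨h, h2.le.trans (hdb' n)⟩, hni⟩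
      exact absurd (csInf_le (hSdbdd n) ht) (not_le.mpr h2)
  have hseg : ∀ n, ∀ t, c n ≤ t → t ≤ d n → ϕ t z ∈ N := by
    intro n t h1 h2
    have h3 : t ∈ closure (Ioo (c n) (d n)) := by
      rw [closure_Ioo (hcd n).ne]
      exact ⟨h1, h2⟩
    have h4 : ϕ t z ∈ closure ((fun s => ϕ s z) '' Ioo (c n) (d n)) :=
      image_closure_subset_closure_image hcz ⟨t, h3, rfl⟩
    have himg : (fun s => ϕ s z) '' Ioo (c n) (d n) ⊆ interior N := by
      rintro y ⟨s, hs, rfl⟩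
      exact hmid n s hs.1 hs.2
    have h5 : ϕ t z ∈ closure (interior N) := closure_mono himg h4
    exact closure_minimal interior_subset hNcl h5
  -- limit points u and v on the boundary shell
  set K : Set M := N \ interior N with hKdef
  have hKc : IsCompact K := hNc.diff isOpen_interior
  have hcK : ∀ n, ϕ (c n) z ∈ K := fun n => ⟨hseg n (c n) le_rfl (hcd n).le, hcmem n⟩
  have hdK : ∀ n, ϕ (d n) z ∈ K := fun n => ⟨hseg n (d n) (hcd n).le le_rfl, hdmem n⟩
  obtain ⟨u, huK, φ₁, hφ₁, hφ₁lim⟩ := hKc.tendsto_subseq hcK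
  obtain ⟨v, hvK, φ₂, hφ₂, hφ₂lim⟩ :=
    hKc.tendsto_subseq (x := fun k => ϕ (d (φ₁ k)) z) fun k => hdK _
  set e : ℕ → ℕ := φ₁ ∘ φ₂ with hedef
  have heSM : StrictMono e := hφ₁.comp hφ₂
  have hclim : Tendsto (fun k => ϕ (c (e k)) z) atTop (𝓝 u) :=
    hφ₁lim.comp hφ₂.tendsto_atTop
  have hdlim : Tendsto (fun k => ϕ (d (e k)) z) atTop (𝓝 v) := hφ₂lim
  have halim : Tendsto (fun k => ϕ (a (e k)) z) atTop (𝓝 p) := by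
    rw [tendsto_iff_dist_tendsto_zero]
    refine squeeze_zero (fun k => dist_nonneg) (fun k => ?_)
      tendsto_one_div_add_atTop_nhds_zero_nat
    refine (hap (e k)).le.trans ?_
    have h1 : (k : ℝ) + 1 ≤ (e k : ℝ) + 1 := by
      have hk : (k : ℝ) ≤ (e k : ℝ) := Nat.cast_le.mpr heSM.le_apply
      linarith
    exact one_div_le_one_div_of_le (by positivity) h1
  have hcatop : Tendsto (fun k => c (e k)) atTop atTop := by
    refine tendsto_atTop_mono (fun k => ?_) tendsto_natCast_atTop_atTop
    calc (k : ℝ) ≤ (e k : ℝ) := Nat.cast_le.mpr heSM.le_apply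
    _ ≤ b (e k) := hnb (e k)
    _ ≤ c (e k) := hcb (e k)
  have hdatop : Tendsto (fun k => d (e k)) atTop atTop := by
    refine tendsto_atTop_mono (fun k => ?_) tendsto_natCast_atTop_atTop
    calc (k : ℝ) ≤ (e k : ℝ) := Nat.cast_le.mpr heSM.le_apply
    _ ≤ b (e k) := hnb (e k)
    _ ≤ c (e k) := hcb (e k)
    _ ≤ d (e k) := (hcd (e k)).le
  have huω : u ∈ omegaSet ϕ z := NSAux.mem_omegaSet_of_tendsto ϕ hcatop hclim
  have hvω : v ∈ omegaSet ϕ z := NSAux.mem_omegaSet_of_tendsto ϕ hdatop hdlim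
  have huX : u ∉ X := fun h => huK.2 (hXiN h)
  have hvX : v ∉ X := fun h => hvK.2 (hXiN h)
  -- crossing times diverge
  have hgap1 : Tendsto (fun k => a (e k) - c (e k)) atTop atTop := by
    refine NSAux.gap_tendsto ϕ (fun k => (hca (e k)).le) hclim halim ?_
    intro s hs
    exact huX (NSAux.flowInv.mem_of ϕ hXinv (hs ▸ hpX))
  have hgap2 : Tendsto (fun k => d (e k) - a (e k)) atTop atTop := by
    refine NSAux.gap_tendsto ϕ (fun k => (had (e k)).le) halim hdlim ?_
    intro s hs
    exact hvX (hs ▸ NSAux.flowInv.mem ϕ hXinv hpX s)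
  -- u is forward trapped in N, v backward trapped
  have hupos : ∀ t : ℝ, 0 ≤ t → ϕ t u ∈ N := by
    intro t ht
    have hlim2 : Tendsto (fun k => ϕ (t + c (e k)) z) atTop (𝓝 (ϕ t u)) := by
      have h0 := ((ϕ.continuous_toFun t).tendsto u).comp hclim
      simpa only [Function.comp_def, ← ϕ.map_add] using h0
    refine hNcl.mem_of_tendsto hlim2 ?_
    filter_upwards [hgap1.eventually_ge_atTop t] with k hk
    exact hseg (e k) (t + c (e k)) (by linarith) (by linarith [(had (e k)).le])
  have hvneg : ∀ t : ℝ, t ≤ 0 → ϕ t v ∈ N := by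
    intro t ht
    have hlim2 : Tendsto (fun k => ϕ (t + d (e k)) z) atTop (𝓝 (ϕ t v)) := by
      have h0 := ((ϕ.continuous_toFun t).tendsto v).comp hdlim
      simpa only [Function.comp_def, ← ϕ.map_add] using h0
    refine hNcl.mem_of_tendsto hlim2 ?_
    filter_upwards [hgap2.eventually_ge_atTop (-t)] with k hk
    exact hseg (e k) (t + d (e k)) (by linarith [(hca (e k)).le]) (by linarith)
  obtain ⟨hωune, hωusub⟩ := NSAux.omegaSet_nonempty_subset ϕ hNc hupos
  have hvrev : ∀ t : ℝ, 0 ≤ t → ϕ.reverse t v ∈ N := fun t ht => hvneg (-t) (by linarith)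
  obtain ⟨hαvne, hαvsub⟩ := NSAux.omegaSet_nonempty_subset ϕ.reverse hNc hvrev
  rw [← NSAux.alphaSet_eq_reverse] at hαvne hαvsub
  have hωzcl := NSAux.isClosed_omegaSet ϕ z
  have hωzinv := NSAux.flowInv_omegaSet ϕ z
  by_cases hωuX : omegaSet ϕ u ⊆ X
  · by_cases hαvX : alphaSet ϕ v ⊆ X
    · exact hns ⟨v, hvX, u, huX, hαvne, hαvX, hωune, hωuX⟩
    · obtain ⟨w, hwα, hwX⟩ := not_subset.mp hαvX
      refine hcon ⟨w, ?_, ?_⟩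
      · have hsub : omegaSet ϕ.reverse v ⊆ omegaSet ϕ z :=
          NSAux.omegaSet_subset_of_invariant ϕ.reverse hωzcl
            (NSAux.flowInv.reverse ϕ hωzinv) hvω
        exact hsub (by rw [← NSAux.alphaSet_eq_reverse]; exact hwα)
      · have hinv : flowInv ϕ (alphaSet ϕ v) := by
          rw [NSAux.alphaSet_eq_reverse]
          exact NSAux.flowInv.of_reverse ϕ (NSAux.flowInv_omegaSet ϕ.reverse v)
        rintro y ⟨t, rfl⟩
        exact ⟨hNU (hαvsub (NSAux.flowInv.mem ϕ hinv hwα t)),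
          fun hyX => hwX (NSAux.flowInv.mem_of ϕ hXinv hyX)⟩
  · obtain ⟨w, hwω, hwX⟩ := not_subset.mp hωuX
    refine hcon ⟨w, NSAux.omegaSet_subset_of_invariant ϕ hωzcl hωzinv huω hwω, ?_⟩
    rintro y ⟨t, rfl⟩
    exact ⟨hNU (hωusub (NSAux.flowInv.mem ϕ (NSAux.flowInv_omegaSet ϕ u) hwω t)),
      fun hyX => hwX (NSAux.flowInv.mem_of ϕ hXinv hyX)⟩
end

section
/- Let M be a locally compact metric space with a continuous flow. If a sequence (Λₙ) of nonempty compact invariant subsets of M satisfies sup{dist(y, S) : y ∈ Λₙ} → 0 for a compact minimal set S, then Λₙ converges to S in the Hausdorff metric. -/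
open Set Filter Metric Topology TopologicalSpace

variable {M : Type*} [MetricSpace M]

lemma orbit_image_eq (ϕ : Flow ℝ M) (x : M) (t : ℝ) : ϕ t '' orbit ϕ x = orbit ϕ x := by
  ext y
  constructor
  · rintro ⟨z, ⟨s, rfl⟩, rfl⟩
    refine ⟨t + s, ?_⟩
    show ϕ (t + s) x = ϕ t (ϕ s x)
    exact ϕ.map_add t s x
  · rintro ⟨s, rfl⟩
    refine ⟨ϕ (s - t) x, ⟨s - t, rfl⟩, ?_⟩
    show ϕ t (ϕ (s - t) x) = ϕ s x
    rw [← ϕ.map_add]; ring_nf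

lemma flowInv_closure_orbit (ϕ : Flow ℝ M) (x : M) : flowInv ϕ (closure (orbit ϕ x)) := by
  have key : ∀ t : ℝ, ϕ t '' closure (orbit ϕ x) ⊆ closure (orbit ϕ x) := by
    intro t
    calc ϕ t '' closure (orbit ϕ x) ⊆ closure (ϕ t '' orbit ϕ x) :=
          image_closure_subset_closure_image (ϕ.continuous continuous_const continuous_id)
      _ = closure (orbit ϕ x) := by rw [orbit_image_eq]
  intro t
  refine subset_antisymm (key t) ?_
  intro z hz
  have h1 : ϕ (-t) z ∈ closure (orbit ϕ x) := key (-t) ⟨z, hz, rfl⟩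
  refine ⟨ϕ (-t) z, h1, ?_⟩
  rw [← ϕ.map_add]
  simp [ϕ.map_zero_apply]

lemma closure_orbit_eq_of_minimal (ϕ : Flow ℝ M) {S : Set M} (hS : IsMinimalSet ϕ S)
    {y : M} (hy : y ∈ S) : closure (orbit ϕ y) = S := by
  obtain ⟨-, hScl, hSinv, hmin⟩ := hS
  have horb : orbit ϕ y ⊆ S := by
    rintro - ⟨t, rfl⟩
    rw [← hSinv t]
    exact ⟨y, hy, rfl⟩
  exact hmin _ (hScl.closure_subset_iff.2 horb)
    ⟨y, subset_closure ⟨0, ϕ.map_zero_apply y⟩⟩ isClosed_closure (flowInv_closure_orbit ϕ y)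

theorem approach_minimal_implies_hausdorff_convergence
    {M : Type*} [MetricSpace M] [LocallyCompactSpace M]
    (ϕ : Flow ℝ M) (Λ : ℕ → Set M) (S : Set M)
    (hΛ : ∀ n, (Λ n).Nonempty ∧ IsCompact (Λ n) ∧ flowInv ϕ (Λ n))
    (hSc : IsCompact S) (hSmin : IsMinimalSet ϕ S)
    (happ : ∀ ε > (0 : ℝ), ∀ᶠ n in atTop, Λ n ⊆ Metric.thickening ε S) :
    Tendsto (fun n => Metric.hausdorffDist (Λ n) S) atTop (𝓝 0) := by
  -- Key claim: for every ε > 0, eventually every point of S is within ε of Λ n.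
  have hSne : S.Nonempty := hSmin.1
  have hScl : IsClosed S := hSmin.2.1
  have key : ∀ ε > (0 : ℝ), ∀ᶠ n in atTop, ∀ x ∈ S, infDist x (Λ n) ≤ ε := by
    intro ε hε
    by_contra hcon
    have hfreq : ∃ᶠ n in atTop, ∃ x ∈ S, ε < infDist x (Λ n) := by
      rw [Filter.not_eventually] at hcon
      refine hcon.mono fun n hn => ?_
      push_neg at hn
      exact hn
    -- a compact neighborhood K of S
    obtain ⟨K, hKc, hKint⟩ := exists_compact_superset hSc
    obtain ⟨δ, hδ, hδK⟩ := hSc.exists_thickening_subset_open isOpen_interior hKint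
    have hfreq2 : ∃ᶠ n in atTop,
        (∃ x ∈ S, ε < infDist x (Λ n)) ∧ Λ n ⊆ Metric.thickening δ S :=
      hfreq.and_eventually (happ δ hδ)
    obtain ⟨φ, hφ, hφP⟩ := Filter.extraction_of_frequently_atTop hfreq2
    choose s hsS hsd using fun k => (hφP k).1
    choose y hyΛ using fun k => ((hΛ (φ k)).1 : (Λ (φ k)).Nonempty)
    have hyK : ∀ k, y k ∈ K := fun k =>
      interior_subset (hδK ((hφP k).2 (hyΛ k)))
    have hyd : Tendsto (fun k => infDist (y k) S) atTop (𝓝 0) := by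
      rw [Metric.tendsto_atTop]
      intro r hr
      have := hφ.tendsto_atTop.eventually (happ (r/2) (by linarith))
      rw [eventually_atTop] at this
      obtain ⟨N, hN⟩ := this
      refine ⟨N, fun k hk => ?_⟩
      have h1 : infDist (y k) S ≤ r/2 := by
        obtain ⟨z, hz, hzd⟩ := Metric.mem_thickening_iff.1 (hN k hk (hyΛ k))
        exact le_trans (Metric.infDist_le_dist_of_mem hz) hzd.le
      have h0 : 0 ≤ infDist (y k) S := Metric.infDist_nonneg
      rw [Real.dist_eq, sub_zero, abs_of_nonneg h0]
      linarith
    obtain ⟨yl, hylK, ψ1, hψ1, hψ1t⟩ := hKc.tendsto_subseq hyK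
    obtain ⟨sl, hslS, ψ2, hψ2, hψ2t⟩ := hSc.tendsto_subseq (fun k => hsS (ψ1 k))
    have hytt : Tendsto (fun k => y (ψ1 (ψ2 k))) atTop (𝓝 yl) :=
      hψ1t.comp hψ2.tendsto_atTop
    have hylS : yl ∈ S := by
      have h1 : Tendsto (fun k => infDist (y (ψ1 k)) S) atTop (𝓝 (infDist yl S)) :=
        ((continuous_infDist_pt S).tendsto yl).comp hψ1t
      have h2 : Tendsto (fun k => infDist (y (ψ1 k)) S) atTop (𝓝 0) :=
        hyd.comp hψ1.tendsto_atTop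
      have := tendsto_nhds_unique h1 h2
      exact (hScl.mem_iff_infDist_zero hSne).2 this
    -- minimality: the orbit of yl is dense in S
    have hdense : closure (orbit ϕ yl) = S := closure_orbit_eq_of_minimal ϕ hSmin hylS
    have hslcl : sl ∈ closure (orbit ϕ yl) := hdense ▸ hslS
    obtain ⟨-, ⟨t, rfl⟩, hwd⟩ := Metric.mem_closure_iff.1 hslcl (ε/3) (by linarith)
    simp only [] at hwd
    -- continuity of ϕ t
    have hcontt : Tendsto (fun k => ϕ t (y (ψ1 (ψ2 k)))) atTop (𝓝 (ϕ t yl)) :=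
      ((ϕ.continuous continuous_const continuous_id).tendsto yl).comp hytt
    have hev1 : ∀ᶠ k in atTop, dist (ϕ t (y (ψ1 (ψ2 k)))) (ϕ t yl) < ε/3 :=
      Metric.tendsto_nhds.1 hcontt _ (by linarith)
    have hev2 : ∀ᶠ k in atTop, dist (s (ψ1 (ψ2 k))) sl < ε/3 :=
      Metric.tendsto_nhds.1 hψ2t _ (by linarith)
    obtain ⟨k, h1, h2⟩ := (hev1.and hev2).exists
    set n := φ (ψ1 (ψ2 k)) with hn
    have hmem : ϕ t (y (ψ1 (ψ2 k))) ∈ Λ n := by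
      have := (hΛ n).2.2 t
      rw [← this]
      exact ⟨_, hyΛ (ψ1 (ψ2 k)), rfl⟩
    have hd : dist (s (ψ1 (ψ2 k))) (ϕ t (y (ψ1 (ψ2 k)))) < ε := by
      calc dist (s (ψ1 (ψ2 k))) (ϕ t (y (ψ1 (ψ2 k))))
          ≤ dist (s (ψ1 (ψ2 k))) sl + dist sl (ϕ t yl)
            + dist (ϕ t yl) (ϕ t (y (ψ1 (ψ2 k)))) := dist_triangle4 _ _ _ _
        _ < ε/3 + ε/3 + ε/3 := by
            rw [dist_comm sl (ϕ t yl), dist_comm (ϕ t yl)]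
            have h1' : dist (ϕ t yl) (ϕ t (y (ψ1 (ψ2 k)))) < ε/3 := by
              rw [dist_comm]; exact h1
            exact add_lt_add (add_lt_add h2 hwd) h1'
        _ = ε := by ring
    have : infDist (s (ψ1 (ψ2 k))) (Λ n) ≤ dist (s (ψ1 (ψ2 k))) (ϕ t (y (ψ1 (ψ2 k)))) :=
      Metric.infDist_le_dist_of_mem hmem
    exact absurd (lt_of_le_of_lt this hd) (not_lt.2 (hsd (ψ1 (ψ2 k))).le)
  -- conclude Hausdorff convergence
  rw [Metric.tendsto_atTop]
  intro ε hε
  have h1 := happ (ε/2) (by linarith)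
  have h2 := key (ε/2) (by linarith)
  rw [eventually_atTop] at h1 h2
  obtain ⟨N1, hN1⟩ := h1
  obtain ⟨N2, hN2⟩ := h2
  refine ⟨max N1 N2, fun n hn => ?_⟩
  have hb : Metric.hausdorffDist (Λ n) S ≤ ε/2 := by
    apply Metric.hausdorffDist_le_of_infDist (by linarith)
    · intro x hx
      obtain ⟨z, hz, hzd⟩ := Metric.mem_thickening_iff.1
        (hN1 n (le_trans (le_max_left _ _) hn) hx)
      exact le_trans (Metric.infDist_le_dist_of_mem hz) hzd.le
    · exact hN2 n (le_trans (le_max_right _ _) hn)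
  have h0 : 0 ≤ Metric.hausdorffDist (Λ n) S := Metric.hausdorffDist_nonneg
  rw [Real.dist_eq, sub_zero, abs_of_nonneg h0]
  linarith
end

section
/- Let M be a locally compact metric space with a continuous flow, and Q a compact minimal set. Then for every ε > 0 there exists δ > 0 such that every nonempty compact invariant set contained in the open ball B(Q, δ) lies within Hausdorff distance ε of Q. -/
open Set Filter Metric Topology TopologicalSpace

variable {M : Type*} [MetricSpace M]

lemma my_orbit_subset_of_inv (ϕ : Flow ℝ M) {s : Set M} (hs : flowInv ϕ s) {x : M}
    (hx : x ∈ s) : orbit ϕ x ⊆ s := by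
  rintro _ ⟨t, rfl⟩
  rw [← hs t]
  exact ⟨x, hx, rfl⟩

lemma my_flowInv_orbit (ϕ : Flow ℝ M) (x : M) : flowInv ϕ (orbit ϕ x) := by
  intro t
  ext y
  constructor
  · rintro ⟨_, ⟨s, rfl⟩, rfl⟩
    exact ⟨t + s, ϕ.map_add t s x⟩
  · rintro ⟨s, rfl⟩
    refine ⟨ϕ (s - t) x, ⟨s - t, rfl⟩, ?_⟩
    rw [← ϕ.map_add]
    congr 1
    ring

lemma my_flowInv_closure (ϕ : Flow ℝ M) {s : Set M} (hs : flowInv ϕ s) :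
    flowInv ϕ (closure s) := by
  intro t
  rw [show (ϕ t '' closure s) = (ϕ.toHomeomorph t) '' closure s from rfl,
    (ϕ.toHomeomorph t).image_closure]
  exact congrArg closure (hs t)

lemma my_dense_orbit (ϕ : Flow ℝ M) {Q : Set M} (hQmin : IsMinimalSet ϕ Q) {x : M}
    (hx : x ∈ Q) : closure (orbit ϕ x) = Q := by
  obtain ⟨-, hQcl, hQinv, hmax⟩ := hQmin
  refine hmax _ ?_ ?_ isClosed_closure (my_flowInv_closure ϕ (my_flowInv_orbit ϕ x))
  · rw [← hQcl.closure_eq]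
    exact closure_mono (my_orbit_subset_of_inv ϕ hQinv hx)
  · exact ⟨x, subset_closure ⟨0, ϕ.map_zero_apply x⟩⟩

theorem minimal_set_hausdorff_control
    {M : Type*} [MetricSpace M] [LocallyCompactSpace M]
    (ϕ : Flow ℝ M) (Q : Set M) (hQc : IsCompact Q) (hQmin : IsMinimalSet ϕ Q) :
    ∀ ε > (0 : ℝ), ∃ δ > (0 : ℝ), ∀ Λ : Set M,
      Λ.Nonempty → IsCompact Λ → flowInv ϕ Λ → Λ ⊆ Metric.thickening δ Q →
        Metric.hausdorffDist Λ Q ≤ ε := by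
  intro ε hε
  obtain ⟨x0, hx0Q⟩ := hQmin.1
  have hQinv := hQmin.2.2.1
  -- finite ε/2-net of Q
  obtain ⟨F, hFQ, hFfin, hFcov⟩ := hQc.elim_finite_subcover_image
    (fun q (_ : q ∈ Q) => isOpen_ball (x := q) (ε := ε / 2))
    (fun q hq => mem_iUnion₂.2 ⟨q, hq, mem_ball_self (by linarith)⟩)
  -- for each x ∈ Q, an open neighborhood whose points have ε-dense orbits in Q
  have key : ∀ x ∈ Q, ∃ U, IsOpen U ∧ x ∈ U ∧
      ∀ y ∈ U, ∀ q ∈ Q, ∃ t : ℝ, dist q (ϕ t y) < ε := by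
    intro x hx
    have hdense := my_dense_orbit ϕ hQmin hx
    have hpt : ∀ q' ∈ F, ∃ t : ℝ, dist q' (ϕ t x) < ε / 2 := by
      intro q' hq'
      have : q' ∈ closure (orbit ϕ x) := hdense ▸ hFQ hq'
      obtain ⟨p, ⟨t, rfl⟩, hp⟩ := Metric.mem_closure_iff.1 this (ε / 2) (by linarith)
      exact ⟨t, hp⟩
    choose! t ht using hpt
    refine ⟨⋂ q' ∈ F, {y | dist q' (ϕ (t q') y) < ε / 2}, ?_, ?_, ?_⟩
    · exact hFfin.isOpen_biInter fun q' _ =>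
        isOpen_lt (by fun_prop) continuous_const
    · exact mem_iInter₂.2 fun q' hq' => ht q' hq'
    · intro y hy q hq
      obtain ⟨q', hq'F, hq'⟩ := mem_iUnion₂.1 (hFcov hq)
      refine ⟨t q', ?_⟩
      have h1 : dist q' (ϕ (t q') y) < ε / 2 := mem_iInter₂.1 hy q' hq'F
      calc dist q (ϕ (t q') y) ≤ dist q q' + dist q' (ϕ (t q') y) := dist_triangle _ _ _
        _ < ε / 2 + ε / 2 := add_lt_add (mem_ball.1 hq') h1
        _ = ε := by ring
  choose! U hUopen hUmem hUprop using key
  -- a thickening of Q inside the union of the U's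
  obtain ⟨δ₀, hδ₀, hthick⟩ := hQc.exists_thickening_subset_open
    (isOpen_biUnion fun x hx => hUopen x hx) (fun x hx => mem_iUnion₂.2 ⟨x, hx, hUmem x hx⟩)
  refine ⟨min δ₀ ε, lt_min hδ₀ hε, ?_⟩
  rintro Λ ⟨y, hy⟩ hΛc hΛinv hΛsub
  apply Metric.hausdorffDist_le_of_infDist hε.le
  · intro z hz
    have := (Metric.mem_thickening_iff_infDist_lt ⟨x0, hx0Q⟩).1 (hΛsub hz)
    exact this.le.trans (min_le_right _ _)
  · intro q hq
    have hyV : y ∈ ⋃ x ∈ Q, U x :=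
      hthick (Metric.thickening_mono (min_le_left _ _) Q (hΛsub hy))
    obtain ⟨x, hxQ, hyU⟩ := mem_iUnion₂.1 hyV
    obtain ⟨s, hs⟩ := hUprop x hxQ y hyU q hq
    have hmem : ϕ s y ∈ Λ := by
      rw [← hΛinv s]
      exact ⟨y, hy, rfl⟩
    exact (Metric.infDist_le_dist_of_mem hmem).trans hs.le
end

section
/- Let M be a metric space with a continuous flow, and (xₙ) a sequence of periodic points with minimal periods λₙ. If xₙ → x and (λₙ) converges in [0, ∞), then x is either a periodic point or an equilibrium of the flow. -/
open Set Filter Metric Topology TopologicalSpace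

variable {M : Type*} [MetricSpace M]

theorem limit_of_periodic_points
    {M : Type*} [MetricSpace M]
    (ϕ : Flow ℝ M) (x : M) (xs : ℕ → M) (lam : ℕ → ℝ)
    (hper : ∀ n, MinPeriod ϕ (xs n) (lam n))
    (hx : Tendsto xs atTop (𝓝 x))
    (T : ℝ) (hT : 0 ≤ T) (hlam : Tendsto lam atTop (𝓝 T)) :
    (∃ p : ℝ, MinPeriod ϕ x p) ∨ IsEquilibrium ϕ x := by
  have hperiod : ∀ n (k : ℤ), ϕ (k * lam n) (xs n) = xs n := by
    intro n k
    have : (k : ℝ) * lam n ∈ {t : ℝ | ϕ t (xs n) = xs n} := by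
      rw [(hper n).2]; exact ⟨k, rfl⟩
    exact this
  -- Step 1: ϕ T x = x
  have hTx : ϕ T x = x := by
    have h1 : Tendsto (fun n => ϕ (lam n) (xs n)) atTop (𝓝 (ϕ T x)) :=
      (ϕ.cont'.tendsto (T, x)).comp (hlam.prodMk_nhds hx)
    have h2 : (fun n => ϕ (lam n) (xs n)) = xs := by
      funext n
      have := hperiod n 1
      simpa using this
    rw [h2] at h1
    exact tendsto_nhds_unique h1 hx
  rcases eq_or_lt_of_le hT with hT0 | hT0
  · -- T = 0 : equilibrium
    right
    intro t
    have hlam0 : Tendsto lam atTop (𝓝 0) := by rwa [← hT0] at hlam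
    set r : ℕ → ℝ := fun n => t - ⌊t / lam n⌋ * lam n with hr
    have hϕ : ∀ n, ϕ t (xs n) = ϕ (r n) (xs n) := by
      intro n
      have : t = r n + ⌊t / lam n⌋ * lam n := by ring
      rw [this, ϕ.map_add, hperiod n _]
    have hr0 : Tendsto r atTop (𝓝 0) := by
      have hub : ∀ n, r n < lam n := by
        intro n
        have hpos := (hper n).1
        have := Int.sub_floor_div_mul_lt t hpos
        simpa [hr] using this
      have hlb : ∀ n, 0 ≤ r n := by
        intro n
        have hpos := (hper n).1
        have := Int.sub_floor_div_mul_nonneg t hpos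
        simpa [hr] using this
      exact tendsto_of_tendsto_of_tendsto_of_le_of_le tendsto_const_nhds hlam0
        hlb (fun n => (hub n).le)
    have h1 : Tendsto (fun n => ϕ (r n) (xs n)) atTop (𝓝 (ϕ 0 x)) :=
      (ϕ.cont'.tendsto (0, x)).comp (hr0.prodMk_nhds hx)
    have h2 : Tendsto (fun n => ϕ t (xs n)) atTop (𝓝 (ϕ t x)) :=
      (ϕ.cont'.tendsto (t, x)).comp ((tendsto_const_nhds).prodMk_nhds hx)
    simp only [hϕ] at h2
    have := tendsto_nhds_unique h2 h1
    simpa using this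
  · -- T > 0 : the period set is a nontrivial closed subgroup of ℝ
    set S : AddSubgroup ℝ :=
      { carrier := {t : ℝ | ϕ t x = x}
        zero_mem' := by simp
        add_mem' := by
          intro a b ha hb
          show ϕ (a + b) x = x
          rw [ϕ.map_add, hb, ha]
        neg_mem' := by
          intro a ha
          show ϕ (-a) x = x
          have : ϕ (-a + a) x = x := by simp
          rwa [ϕ.map_add, ha] at this } with hS
    have hTS : T ∈ S := hTx
    have hclosed : IsClosed (S : Set ℝ) := by
      have : (S : Set ℝ) = (fun t => ϕ t x) ⁻¹' {x} := by
        ext t; simp [hS]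
      rw [this]
      exact isClosed_singleton.preimage (ϕ.cont'.comp (continuous_id.prodMk continuous_const))
    rcases S.dense_or_cyclic with hdense | ⟨a, ha⟩
    · right
      intro t
      have : (S : Set ℝ) = Set.univ := hclosed.closure_eq ▸ hdense.closure_eq
      have ht : t ∈ (S : Set ℝ) := this ▸ Set.mem_univ t
      exact ht
    · left
      have ha0 : a ≠ 0 := by
        rintro rfl
        rw [AddSubgroup.closure_singleton_zero] at ha
        have := ha ▸ hTS
        simp [AddSubgroup.mem_bot] at this
        exact absurd this (ne_of_gt hT0)
      refine ⟨|a|, abs_pos.mpr ha0, ?_⟩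
      ext t
      simp only [Set.mem_setOf_eq]
      constructor
      · intro ht
        have : t ∈ S := ht
        rw [ha, AddSubgroup.mem_closure_singleton] at this
        obtain ⟨n, hn⟩ := this
        rcases abs_cases a with ⟨h1, _⟩ | ⟨h1, _⟩
        · exact ⟨n, by rw [h1, ← hn]; rw [zsmul_eq_mul]; try push_cast; try ring⟩
        · exact ⟨-n, by rw [h1, ← hn]; rw [zsmul_eq_mul]; try push_cast; try ring⟩
      · rintro ⟨n, rfl⟩
        have : (n : ℝ) * |a| ∈ S := by
          rw [ha, AddSubgroup.mem_closure_singleton]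
          rcases abs_cases a with ⟨h1, _⟩ | ⟨h1, _⟩
          · exact ⟨n, by rw [h1]; rw [zsmul_eq_mul]; try push_cast; try ring⟩
          · exact ⟨-n, by rw [h1]; rw [zsmul_eq_mul]; try push_cast; try ring⟩
        exact this
end

section
/- Let M be a locally compact metric space with a continuous flow and Q a compact aperiodic minimal set (a compact minimal set that is neither an equilibrium orbit nor a periodic orbit). Then for every m ≥ 1 there exists ε > 0 such that every periodic orbit γ with dist(γ, Q) < ε has minimal period greater than m. -/
open Set Filter Metric Topology TopologicalSpace

variable {M : Type*} [MetricSpace M]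

/-- `Q` is a compact aperiodic minimal set: compact minimal, neither an equilibrium
orbit nor a periodic orbit. -/
def IsAperiodicMinimal (ϕ : Flow ℝ M) (Q : Set M) : Prop :=
  IsCompact Q ∧ IsMinimalSet ϕ Q ∧
    (¬ ∃ x : M, IsEquilibrium ϕ x ∧ Q = {x}) ∧
    (¬ ∃ (x : M) (p : ℝ), MinPeriod ϕ x p ∧ Q = orbit ϕ x)


section Aux

variable (ϕ : Flow ℝ M)

lemma flow_neg_cancel (s : ℝ) (x : M) : ϕ (-s) (ϕ s x) = x := by
  rw [← ϕ.map_add, neg_add_cancel, ϕ.map_zero_apply]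

lemma flow_comm (s t : ℝ) (x : M) : ϕ s (ϕ t x) = ϕ t (ϕ s x) := by
  rw [← ϕ.map_add, add_comm, ϕ.map_add]

lemma period_orbit {x y : M} (hy : y ∈ orbit ϕ x) :
    {t : ℝ | ϕ t y = y} = {t : ℝ | ϕ t x = x} := by
  obtain ⟨s, rfl⟩ := hy
  ext t
  simp only [Set.mem_setOf_eq]
  constructor
  · intro h
    have h2 : ϕ s (ϕ t x) = ϕ s x := (flow_comm ϕ s t x).trans h
    have := congrArg (ϕ (-s)) h2
    rwa [flow_neg_cancel, flow_neg_cancel] at this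
  · intro h
    rw [flow_comm, h]

/-- Period set as an additive subgroup of ℝ. -/
def periodGroup (x : M) : AddSubgroup ℝ where
  carrier := {t : ℝ | ϕ t x = x}
  zero_mem' := ϕ.map_zero_apply x
  add_mem' := by
    intro a b ha hb
    simp only [Set.mem_setOf_eq] at *
    rw [ϕ.map_add, hb, ha]
  neg_mem' := by
    intro a ha
    simp only [Set.mem_setOf_eq] at *
    nth_rewrite 1 [← ha]
    exact flow_neg_cancel ϕ a x

lemma periodGroup_closed (x : M) : IsClosed ((periodGroup ϕ x : AddSubgroup ℝ) : Set ℝ) := by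
  have : ((periodGroup ϕ x : AddSubgroup ℝ) : Set ℝ) = (fun t => ϕ t x) ⁻¹' {x} := rfl
  rw [this]
  exact IsClosed.preimage (ϕ.continuous continuous_id continuous_const) isClosed_singleton

end Aux

theorem periods_blow_up_near_aperiodic_minimal
    {M : Type*} [MetricSpace M] [LocallyCompactSpace M]
    (ϕ : Flow ℝ M) (Q : Set M) (hQ : IsAperiodicMinimal ϕ Q) :
    ∀ m : ℕ, 1 ≤ m → ∃ ε > (0 : ℝ), ∀ (x : M) (p : ℝ), MinPeriod ϕ x p →
      (∃ y ∈ orbit ϕ x, Metric.infDist y Q < ε) → (m : ℝ) < p := by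
  intro m hm
  by_contra hcon
  push_neg at hcon
  obtain ⟨hQcomp, hQmin, hQeq, hQper⟩ := hQ
  obtain ⟨hQne, hQclosed, hQinv, hQminimal⟩ := hQmin
  obtain ⟨K, hKcomp, hKint⟩ := exists_compact_superset hQcomp
  obtain ⟨δ, hδ, hδK⟩ := hQcomp.exists_thickening_subset_open isOpen_interior hKint
  have hseq : ∀ n : ℕ, ∃ (y : M) (p : ℝ), MinPeriod ϕ y p ∧
      Metric.infDist y Q < min δ (1 / (n + 1)) ∧ p ≤ m := by
    intro n
    have hpos : (0 : ℝ) < min δ (1 / (n + 1)) := lt_min hδ (by positivity)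
    obtain ⟨x, p, hxp, ⟨y, hy, hyd⟩, hpm⟩ := hcon _ hpos
    exact ⟨y, p, ⟨hxp.1, by rw [period_orbit ϕ hy]; exact hxp.2⟩, hyd, hpm⟩
  choose y pp hper hdist hpm using hseq
  have hp0 : ∀ n, 0 < pp n := fun n => (hper n).1
  set qq : ℕ → ℝ := fun n => (⌈1 / pp n⌉ : ℝ) * pp n with hqqdef
  have hqper : ∀ n, ϕ (qq n) (y n) = y n := by
    intro n
    have : qq n ∈ {t : ℝ | ∃ k : ℤ, t = k * pp n} := ⟨⌈1 / pp n⌉, rfl⟩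
    rw [← (hper n).2] at this
    exact this
  have hq1 : ∀ n, 1 ≤ qq n := by
    intro n
    have h3 := mul_le_mul_of_nonneg_right (Int.le_ceil (1 / pp n)) (hp0 n).le
    rw [div_mul_cancel₀ 1 (hp0 n).ne'] at h3
    exact h3
  have hq2 : ∀ n, qq n ≤ m + 1 := by
    intro n
    have h1 : (⌈1 / pp n⌉ : ℝ) ≤ 1 / pp n + 1 := (Int.ceil_lt_add_one _).le
    have := mul_le_mul_of_nonneg_right h1 (hp0 n).le
    have h2 : (1 / pp n + 1) * pp n = 1 + pp n := by
      rw [add_mul, one_mul, div_mul_cancel₀ 1 (hp0 n).ne']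
    rw [h2] at this
    have : qq n ≤ 1 + pp n := this
    linarith [hpm n]
  have hyK : ∀ n, y n ∈ K := by
    intro n
    have : y n ∈ Metric.thickening δ Q :=
      (Metric.mem_thickening_iff_infDist_lt hQne).2 ((hdist n).trans_le (min_le_left _ _))
    exact interior_subset (hδK this)
  have hz : ∀ n, (y n, qq n) ∈ K ×ˢ Icc (1 : ℝ) (m + 1) :=
    fun n => ⟨hyK n, hq1 n, hq2 n⟩
  obtain ⟨⟨q, p⟩, hl, φ, hφ, hconv⟩ :=
    (hKcomp.prod isCompact_Icc).tendsto_subseq hz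
  have hyq : Tendsto (fun n => y (φ n)) atTop (𝓝 q) :=
    (continuous_fst.tendsto _).comp hconv
  have hqp : Tendsto (fun n => qq (φ n)) atTop (𝓝 p) :=
    (continuous_snd.tendsto _).comp hconv
  have hp1 : (1 : ℝ) ≤ p := hl.2.1
  -- q ∈ Q
  have hqQ : q ∈ Q := by
    have hd0 : Tendsto (fun n => Metric.infDist (y (φ n)) Q) atTop (𝓝 0) := by
      apply squeeze_zero (fun n => Metric.infDist_nonneg)
        (fun n => ((hdist (φ n)).trans_le (min_le_right _ _)).le)
      have : Tendsto (fun n : ℕ => 1 / ((n : ℝ) + 1)) atTop (𝓝 0) :=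
        tendsto_one_div_add_atTop_nhds_zero_nat
      exact this.comp hφ.tendsto_atTop
    have hd1 : Tendsto (fun n => Metric.infDist (y (φ n)) Q) atTop (𝓝 (Metric.infDist q Q)) :=
      ((Metric.continuous_infDist_pt Q).tendsto q).comp hyq
    have := tendsto_nhds_unique hd1 hd0
    exact (hQclosed.mem_iff_infDist_zero hQne).2 this
  -- ϕ p q = q
  have hpq : ϕ p q = q := by
    have hpair : Tendsto (fun n => (qq (φ n), y (φ n))) atTop (𝓝 (p, q)) :=
      hqp.prodMk_nhds hyq
    have h1 : Tendsto (fun n => ϕ (qq (φ n)) (y (φ n))) atTop (𝓝 (ϕ p q)) :=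
      (ϕ.cont'.tendsto (p, q)).comp hpair
    have h2 : Tendsto (fun n => ϕ (qq (φ n)) (y (φ n))) atTop (𝓝 q) := by
      simpa only [hqper] using hyq
    exact tendsto_nhds_unique h1 h2
  by_cases heq : ∀ t : ℝ, ϕ t q = q
  · refine hQeq ⟨q, heq, ?_⟩
    refine (hQminimal {q} (singleton_subset_iff.2 hqQ) ⟨q, rfl⟩ isClosed_singleton
      (fun t => by rw [Set.image_singleton, heq])).symm
  · push_neg at heq
    obtain ⟨t0, ht0⟩ := heq
    set S : AddSubgroup ℝ := periodGroup ϕ q with hSdef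
    have hpS : p ∈ S := hpq
    rcases S.dense_or_cyclic with hd | ⟨a, ha⟩
    · have hSu : (S : Set ℝ) = univ := by
        rw [← (periodGroup_closed ϕ q).closure_eq, hd.closure_eq]
      have : t0 ∈ S := by rw [← SetLike.mem_coe, hSu]; trivial
      exact ht0 this
    · have ha0 : a ≠ 0 := by
        rintro rfl
        rw [ha, AddSubgroup.mem_closure_singleton] at hpS
        obtain ⟨n, hn⟩ := hpS
        simp at hn
        linarith
    -- minimal period |a|
      have hmemiff : ∀ t : ℝ, ϕ t q = q ↔ ∃ n : ℤ, t = (n : ℝ) * |a| := by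
        intro t
        have h1 : ϕ t q = q ↔ t ∈ S := Iff.rfl
        rw [h1, ha, AddSubgroup.mem_closure_singleton]
        constructor
        · rintro ⟨n, rfl⟩
          rcases abs_cases a with ⟨h, _⟩ | ⟨h, _⟩
          · exact ⟨n, by rw [h, zsmul_eq_mul]⟩
          · exact ⟨-n, by rw [h, zsmul_eq_mul]; push_cast; ring⟩
        · rintro ⟨n, rfl⟩
          rcases abs_cases a with ⟨h, _⟩ | ⟨h, _⟩
          · exact ⟨n, by rw [h, zsmul_eq_mul]⟩
          · exact ⟨-n, by rw [h, zsmul_eq_mul]; push_cast; ring⟩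
      have hMP : MinPeriod ϕ q |a| := by
        refine ⟨abs_pos.2 ha0, ?_⟩
        ext t
        simpa using hmemiff t
      have haper : ϕ |a| q = q := (hmemiff |a|).2 ⟨1, by simp⟩
      -- orbit is Q
      have horbsub : orbit ϕ q ⊆ Q := by
        rintro _ ⟨t, rfl⟩
        rw [← hQinv t]
        exact mem_image_of_mem _ hqQ
      have horbs : orbit ϕ q = (fun t => ϕ t q) '' Icc 0 |a| := by
        apply Subset.antisymm
        · rintro _ ⟨t, rfl⟩
          have hA : (0 : ℝ) < |a| := abs_pos.2 ha0
          have hfl : ((⌊t / |a|⌋ : ℝ)) * |a| ≤ t := by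
            have h4 := mul_le_mul_of_nonneg_right (Int.floor_le (t / |a|)) hA.le
            rwa [div_mul_cancel₀ _ hA.ne'] at h4
          have hfl2 : t ≤ ((⌊t / |a|⌋ : ℝ)) * |a| + |a| := by
            have h4 := mul_le_mul_of_nonneg_right (Int.lt_floor_add_one (t / |a|)).le hA.le
            rwa [div_mul_cancel₀ _ hA.ne', add_mul, one_mul] at h4
          have hper' : ϕ ((⌊t / |a|⌋ : ℝ) * |a|) q = q := (hmemiff _).2 ⟨⌊t / |a|⌋, rfl⟩
          refine ⟨t - (⌊t / |a|⌋ : ℝ) * |a|, ⟨by linarith, by linarith⟩, ?_⟩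
          show ϕ (t - (⌊t / |a|⌋ : ℝ) * |a|) q = ϕ t q
          have h5 : ϕ t q = ϕ (t - (⌊t / |a|⌋ : ℝ) * |a|) (ϕ ((⌊t / |a|⌋ : ℝ) * |a|) q) := by
            rw [← ϕ.map_add]
            congr 1
            ring
          rw [h5, hper']
        · rintro _ ⟨t, _, rfl⟩
          exact ⟨t, rfl⟩
      have horbclosed : IsClosed (orbit ϕ q) := by
        rw [horbs]
        exact (isCompact_Icc.image (ϕ.continuous continuous_id continuous_const)).isClosed
      have horbinv : flowInv ϕ (orbit ϕ q) := by
        intro t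
        apply Subset.antisymm
        · rintro _ ⟨_, ⟨s, rfl⟩, rfl⟩
          exact ⟨t + s, by exact ϕ.map_add t s q⟩
        · rintro _ ⟨s, rfl⟩
          refine ⟨ϕ (s - t) q, ⟨s - t, rfl⟩, ?_⟩
          show ϕ t (ϕ (s - t) q) = ϕ s q
          rw [← ϕ.map_add]
          congr 1
          ring
      have horbQ : orbit ϕ q = Q :=
        hQminimal (orbit ϕ q) horbsub ⟨q, 0, ϕ.map_zero_apply q⟩ horbclosed horbinv
      exact hQper ⟨q, |a|, hMP, horbQ.symm⟩
end

section
/- Every locally compact, connected metric space is separable, and hence has cardinality at most the continuum. -/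
open Set Filter Metric Topology TopologicalSpace

variable {M : Type*} [MetricSpace M]

section Aux

variable {X : Type*} [MetricSpace X]

/-- Radius of compactness of closed balls around `x` (capped at 1). -/
noncomputable def compactRad (x : X) : ℝ :=
  sSup {s : ℝ | s ≤ 1 ∧ IsCompact (closedBall x s)}

lemma compactRad_set_nonempty (x : X) :
    {s : ℝ | s ≤ 1 ∧ IsCompact (closedBall x s)}.Nonempty :=
  ⟨0, zero_le_one, by simp [Metric.closedBall_zero, isCompact_singleton]⟩

lemma compactRad_set_bddAbove (x : X) :
    BddAbove {s : ℝ | s ≤ 1 ∧ IsCompact (closedBall x s)} :=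
  ⟨1, fun _ hs => hs.1⟩

lemma compactRad_pos [LocallyCompactSpace X] (x : X) : 0 < compactRad x := by
  obtain ⟨r, hr, hc⟩ := exists_isCompact_closedBall x
  have hmem : min r 1 ∈ {s : ℝ | s ≤ 1 ∧ IsCompact (closedBall x s)} :=
    ⟨min_le_right _ _, hc.of_isClosed_subset Metric.isClosed_closedBall
      (closedBall_subset_closedBall (min_le_left _ _))⟩
  calc (0 : ℝ) < min r 1 := lt_min hr one_pos
    _ ≤ compactRad x := le_csSup (compactRad_set_bddAbove x) hmem

lemma isCompact_closedBall_of_lt_compactRad {x : X} {s : ℝ}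
    (hs : s < compactRad x) : IsCompact (closedBall x s) := by
  obtain ⟨s', hs'mem, hss'⟩ :=
    exists_lt_of_lt_csSup (compactRad_set_nonempty x) hs
  exact hs'mem.2.of_isClosed_subset Metric.isClosed_closedBall
    (closedBall_subset_closedBall hss'.le)

lemma compactRad_lip (x y : X) : compactRad x ≤ compactRad y + dist x y := by
  apply csSup_le (compactRad_set_nonempty x)
  intro s hs
  have hmem : s - dist x y ∈ {s : ℝ | s ≤ 1 ∧ IsCompact (closedBall y s)} := by
    refine ⟨by linarith [hs.1, dist_nonneg (x := x) (y := y)], ?_⟩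
    refine hs.2.of_isClosed_subset Metric.isClosed_closedBall ?_
    exact closedBall_subset_closedBall' (by rw [dist_comm]; linarith)
  have h2 : s - dist x y ≤ compactRad y := le_csSup (compactRad_set_bddAbove y) hmem
  linarith

lemma separableSpace_of_locallyCompact_connected (X : Type*) [MetricSpace X]
    [LocallyCompactSpace X] [ConnectedSpace X] : SeparableSpace X := by
  obtain ⟨x0⟩ : Nonempty X := inferInstance
  -- the growing chain of sets
  let K : ℕ → Set X := fun n =>
    Nat.rec {x0} (fun _ Kn => ⋃ x ∈ Kn, closedBall x (compactRad x / 2)) n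
  have hK0 : K 0 = {x0} := rfl
  have hKsucc : ∀ n, K (n + 1) = ⋃ x ∈ K n, closedBall x (compactRad x / 2) :=
    fun n => rfl
  -- each K n is separable
  have hsep : ∀ n, IsSeparable (K n) := by
    intro n
    induction n with
    | zero => exact (Set.countable_singleton x0).isSeparable
    | succ n ih =>
      obtain ⟨c, hc_count, hsub⟩ := ih
      have hT : IsSeparable (⋃ x' ∈ c, closedBall x' (9 / 10 * compactRad x')) := by
        have : Countable ↥c := hc_count.to_subtype
        rw [Set.biUnion_eq_iUnion]
        apply IsSeparable.iUnion
        rintro ⟨x', -⟩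
        exact (isCompact_closedBall_of_lt_compactRad (by
          have := compactRad_pos x'; linarith)).isSeparable
      refine hT.mono ?_
      rw [hKsucc]
      rintro y hy
      simp only [Set.mem_iUnion] at hy ⊢
      obtain ⟨x, hx, hxy⟩ := hy
      have hrx : 0 < compactRad x := compactRad_pos x
      obtain ⟨x', hx'c, hxx'⟩ :=
        Metric.mem_closure_iff.1 (hsub hx) (compactRad x / 8) (by linarith)
      have hxy' : dist y x ≤ compactRad x / 2 := mem_closedBall.1 hxy
      have hlip := compactRad_lip x x'
      refine ⟨x', hx'c, ?_⟩
      have : dist y x' ≤ dist y x + dist x x' := dist_triangle _ _ _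
      simp only [mem_closedBall]
      nlinarith [dist_nonneg (x := x) (y := x')]
  -- S is the union
  set S : Set X := ⋃ n, K n with hS
  have hSsep : IsSeparable S := IsSeparable.iUnion hsep
  have hmemS : ∀ n x, x ∈ K n → x ∈ S := fun n x hx => Set.mem_iUnion.2 ⟨n, hx⟩
  -- S is open
  have hopen : IsOpen S := by
    rw [Metric.isOpen_iff]
    intro y hy
    obtain ⟨n, hn⟩ := Set.mem_iUnion.1 hy
    refine ⟨compactRad y / 2, by linarith [compactRad_pos y], ?_⟩
    intro z hz
    refine hmemS (n + 1) z ?_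
    rw [hKsucc]
    exact Set.mem_biUnion hn (ball_subset_closedBall hz)
  -- S is closed
  have hclosed : IsClosed S := by
    rw [← closure_subset_iff_isClosed]
    intro y hy
    have hry : 0 < compactRad y := compactRad_pos y
    obtain ⟨x, hxS, hxy⟩ := Metric.mem_closure_iff.1 hy (compactRad y / 4)
      (by linarith)
    obtain ⟨n, hn⟩ := Set.mem_iUnion.1 hxS
    refine hmemS (n + 1) y ?_
    rw [hKsucc]
    refine Set.mem_biUnion hn ?_
    have hlip := compactRad_lip y x
    simp only [mem_closedBall]
    rw [dist_comm] at hlip hxy ⊢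
    linarith
  -- S = univ by connectedness
  have hSuniv : S = Set.univ :=
    IsClopen.eq_univ ⟨hclosed, hopen⟩ ⟨x0, hmemS 0 x0 rfl⟩
  rw [← isSeparable_univ_iff, ← hSuniv]
  exact hSsep

lemma cardinal_mk_le_continuum_of_separable (X : Type*) [MetricSpace X]
    [SeparableSpace X] : Cardinal.mk X ≤ Cardinal.continuum := by
  obtain ⟨s, hs_count, hs_dense⟩ := TopologicalSpace.exists_countable_dense X
  have hpick : ∀ (x : X) (n : ℕ), ∃ y ∈ s, dist x y < 1 / (n + 1) := by
    intro x n
    exact Metric.mem_closure_iff.1 (hs_dense.closure_eq ▸ Set.mem_univ x)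
      _ (by positivity)
  let f : X → ℕ → ↥s := fun x n => ⟨(hpick x n).choose, (hpick x n).choose_spec.1⟩
  have hf : Function.Injective f := by
    intro x y hxy
    apply eq_of_forall_dist_le
    intro ε hε
    obtain ⟨n, hn⟩ := exists_nat_gt (2 / ε)
    have hn1 : (2 : ℝ) / ε < n + 1 := by linarith
    have h1 : dist x ((f x n) : X) < 1 / (n + 1) := (hpick x n).choose_spec.2
    have h2 : dist y ((f y n) : X) < 1 / (n + 1) := (hpick y n).choose_spec.2
    have hfe : ((f x n) : X) = ((f y n) : X) := by rw [hxy]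
    have hd : dist x y ≤ dist x ((f x n) : X) + dist ((f y n) : X) y := by
      rw [hfe]; exact dist_triangle _ _ _
    rw [dist_comm ((f y n) : X) y] at hd
    have hnp : (0 : ℝ) < n + 1 := by positivity
    have h2n : 2 / (n + 1 : ℝ) < ε := by
      rw [div_lt_iff₀ hnp]
      rw [div_lt_iff₀ hε] at hn1
      linarith
    have : (1 : ℝ) / (n + 1) + 1 / (n + 1) = 2 / (n + 1) := by ring
    linarith
  calc Cardinal.mk X ≤ Cardinal.mk (ℕ → ↥s) := Cardinal.mk_le_of_injective hf
    _ = Cardinal.lift (Cardinal.mk ↥s) ^ Cardinal.lift (Cardinal.mk ℕ) :=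
        Cardinal.mk_arrow ℕ ↥s
    _ ≤ Cardinal.aleph0 ^ Cardinal.aleph0 := by
        rw [Cardinal.mk_nat, Cardinal.lift_aleph0]
        exact Cardinal.power_le_power_right
          (Cardinal.lift_le_aleph0.2 (Cardinal.mk_le_aleph0_iff.2 hs_count.to_subtype))
    _ = Cardinal.continuum := Cardinal.aleph0_power_aleph0

end Aux

theorem locallyCompact_connected_separable
    (M : Type*) [MetricSpace M] [LocallyCompactSpace M] [ConnectedSpace M] :
    SeparableSpace M ∧ Cardinal.mk M ≤ Cardinal.continuum := by
  have h1 : SeparableSpace M := separableSpace_of_locallyCompact_connected M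
  exact ⟨h1, cardinal_mk_le_continuum_of_separable M⟩
end

section
/- Let M be a locally compact metric space with a continuous flow, and A ⊆ M an open set such that the family CMin(A) of compact minimal sets contained in A is nonempty and dense in itself in the Hausdorff metric. Then for every Λ₀ ∈ CMin(A) and every ε₀ > 0 with the closed ball B[Λ₀, ε₀] compact and contained in A, there exists a continuum (a family of cardinality 2^ℵ₀) of pairwise disjoint compact minimal sets contained in B(Λ₀, ε₀). -/
open Set Filter Metric Topology TopologicalSpace

variable {M : Type*} [MetricSpace M]

/-- The set of compact minimal sets of the flow contained in `A`. -/
def CMinIn (ϕ : Flow ℝ M) (A : Set M) : Set (Set M) :=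
  {Λ | IsCompact Λ ∧ IsMinimalSet ϕ Λ ∧ Λ ⊆ A}

section ContinuumAux

theorem flow_bijective (ϕ : Flow ℝ M) (t : ℝ) : Function.Bijective (ϕ t) := by
  constructor
  · intro x y h
    have h2 := congrArg (ϕ (-t)) h
    rwa [← ϕ.map_add, ← ϕ.map_add, neg_add_cancel, ϕ.map_zero_apply, ϕ.map_zero_apply] at h2
  · intro x
    exact ⟨ϕ (-t) x, by rw [← ϕ.map_add, add_neg_cancel, ϕ.map_zero_apply]⟩

theorem flowInv_of_forward (ϕ : Flow ℝ M) {K : Set M}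
    (h : ∀ t : ℝ, ϕ t '' K ⊆ K) : flowInv ϕ K := by
  intro t
  refine Subset.antisymm (h t) fun x hx => ?_
  have hx' : ϕ (-t) x ∈ K := h (-t) ⟨x, hx, rfl⟩
  exact ⟨ϕ (-t) x, hx', by rw [← ϕ.map_add, add_neg_cancel, ϕ.map_zero_apply]⟩

theorem minimal_disjoint (ϕ : Flow ℝ M) {s t : Set M} (hs : IsMinimalSet ϕ s)
    (ht : IsMinimalSet ϕ t) (hne : s ≠ t) : Disjoint s t := by
  rw [Set.disjoint_iff_inter_eq_empty]
  by_contra h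
  have hst : (s ∩ t).Nonempty := Set.nonempty_iff_ne_empty.2 h
  have hinv : flowInv ϕ (s ∩ t) := fun u => by
    rw [Set.image_inter (flow_bijective ϕ u).1, hs.2.2.1 u, ht.2.2.1 u]
  have h1 := hs.2.2.2 _ Set.inter_subset_left hst (hs.2.1.inter ht.2.1) hinv
  have h2 := ht.2.2.2 _ Set.inter_subset_right hst (hs.2.1.inter ht.2.1) hinv
  exact hne (h1 ▸ h2)

theorem exists_minimal_subset (ϕ : Flow ℝ M) {K : Set M} (hne : K.Nonempty)
    (hc : IsCompact K) (hcl : IsClosed K) (hinv : flowInv ϕ K) :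
    ∃ m, m ⊆ K ∧ IsMinimalSet ϕ m := by
  set S := {s : Set M | s ⊆ K ∧ s.Nonempty ∧ IsClosed s ∧ flowInv ϕ s} with hS
  have hzorn := zorn_superset_nonempty S ?_ K ⟨subset_rfl, hne, hcl, hinv⟩
  · obtain ⟨m, hmK, hmS, hmin⟩ := hzorn
    refine ⟨m, hmS.1, hmS.2.1, hmS.2.2.1, hmS.2.2.2, fun u hu hune hucl huinv => ?_⟩
    exact Subset.antisymm hu (hmin ⟨hu.trans hmS.1, hune, hucl, huinv⟩ hu)
  · intro c hcS hchain hcne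
    haveI : Nonempty c := hcne.to_subtype
    refine ⟨⋂₀ c, ⟨?_, ?_, ?_, ?_⟩, fun s hs => sInter_subset_of_mem hs⟩
    · obtain ⟨s, hs⟩ := hcne
      exact (sInter_subset_of_mem hs).trans (hcS hs).1
    · rw [sInter_eq_iInter]
      refine IsCompact.nonempty_iInter_of_directed_nonempty_isCompact_isClosed _ ?_
        (fun s => (hcS s.2).2.1) (fun s => hc.of_isClosed_subset (hcS s.2).2.2.1 (hcS s.2).1)
        (fun s => (hcS s.2).2.2.1)
      rintro ⟨s, hs⟩ ⟨u, hu⟩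
      rcases hchain.total hs hu with h | h
      · exact ⟨⟨s, hs⟩, subset_rfl, h⟩
      · exact ⟨⟨u, hu⟩, h, subset_rfl⟩
    · exact isClosed_sInter fun s hs => (hcS hs).2.2.1
    · intro u
      rw [sInter_eq_iInter, Set.image_iInter (flow_bijective ϕ u)]
      exact iInter_congr fun s => (hcS s.2).2.2.2 u

theorem limsup_flowInv (ϕ : Flow ℝ M) (Λ : ℕ → Set M) (hΛ : ∀ n, flowInv ϕ (Λ n)) :
    flowInv ϕ (⋂ n, closure (⋃ m, ⋃ (_ : n ≤ m), Λ m)) := by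
  apply flowInv_of_forward
  intro t
  refine (Set.image_iInter_subset _ _).trans (iInter_mono fun n => ?_)
  have hcont : Continuous (ϕ t) := ϕ.continuous continuous_const continuous_id
  refine (image_closure_subset_closure_image hcont).trans (closure_mono ?_)
  rw [Set.image_iUnion₂]
  exact iUnion₂_mono fun m _ => (hΛ m t).subset

theorem stepEx (ϕ : Flow ℝ M) (A : Set M)
    (hdense : ∀ Λ ∈ CMinIn ϕ A, ∀ ε > (0 : ℝ),
      ∃ Λ' ∈ CMinIn ϕ A, Λ' ≠ Λ ∧ Metric.hausdorffDist Λ' Λ < ε)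
    {p : Set M × ℝ} (h1 : p.1 ∈ CMinIn ϕ A) (h2 : 0 < p.2) :
    ∃ q : Set M × ℝ, q.1 ∈ CMinIn ϕ A ∧ 0 < q.2 ∧ q.2 ≤ p.2 / 2 ∧
      cthickening q.2 q.1 ⊆ cthickening p.2 p.1 ∧
      Disjoint (cthickening q.2 p.1) (cthickening q.2 q.1) := by
  obtain ⟨Λ, r⟩ := p
  simp only at h1 h2 ⊢
  obtain ⟨Λ', hΛ', hne, hd⟩ := hdense Λ h1 (r / 2) (half_pos h2)
  have hdisj : Disjoint Λ Λ' := minimal_disjoint ϕ h1.2.1 hΛ'.2.1 hne.symm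
  obtain ⟨δ, hδ, hdis⟩ := hdisj.exists_cthickenings h1.1 hΛ'.2.1.2.1
  have hfin : EMetric.hausdorffEdist Λ' Λ ≠ ⊤ :=
    hausdorffEdist_ne_top_of_nonempty_of_bounded hΛ'.2.1.1 h1.2.1.1
      hΛ'.1.isBounded h1.1.isBounded
  have hsubΛ : Λ' ⊆ cthickening (r / 2) Λ := by
    intro x hx
    obtain ⟨y, hy, hxy⟩ := exists_dist_lt_of_hausdorffDist_lt hx hd hfin
    exact thickening_subset_cthickening _ _ (mem_thickening_iff.2 ⟨y, hy, hxy⟩)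
  refine ⟨(Λ', min δ (r / 2)), hΛ', lt_min hδ (half_pos h2), min_le_right _ _, ?_, ?_⟩
  · calc cthickening (min δ (r / 2)) Λ'
        ⊆ cthickening (min δ (r / 2)) (cthickening (r / 2) Λ) :=
          cthickening_subset_of_subset _ hsubΛ
      _ ⊆ cthickening (min δ (r / 2) + r / 2) Λ :=
          cthickening_cthickening_subset (le_of_lt (lt_min hδ (half_pos h2)))
            (half_pos h2).le _
      _ ⊆ cthickening r Λ := cthickening_mono (by linarith [min_le_right δ (r / 2)]) _
  · exact hdis.mono (cthickening_mono (min_le_left _ _) _) (cthickening_mono (min_le_left _ _) _)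

variable (ϕ : Flow ℝ M) (A : Set M)
    (hdense : ∀ Λ ∈ CMinIn ϕ A, ∀ ε > (0 : ℝ),
      ∃ Λ' ∈ CMinIn ϕ A, Λ' ≠ Λ ∧ Metric.hausdorffDist Λ' Λ < ε)

-- Choice of the pair of children nodes in the Cantor scheme.
open Classical in
noncomputable def childFn (p : Set M × ℝ) (i : Bool) : Set M × ℝ :=
  if h : p.1 ∈ CMinIn ϕ A ∧ 0 < p.2 then
    if i then Classical.choose (stepEx ϕ A hdense h.1 h.2)
    else (p.1, (Classical.choose (stepEx ϕ A hdense h.1 h.2)).2)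
  else p

theorem childFn_spec {p : Set M × ℝ} (h1 : p.1 ∈ CMinIn ϕ A) (h2 : 0 < p.2) :
    (∀ i, (childFn ϕ A hdense p i).1 ∈ CMinIn ϕ A ∧ 0 < (childFn ϕ A hdense p i).2 ∧
      cthickening (childFn ϕ A hdense p i).2 (childFn ϕ A hdense p i).1 ⊆
        cthickening p.2 p.1) ∧
    Disjoint
      (cthickening (childFn ϕ A hdense p false).2 (childFn ϕ A hdense p false).1)
      (cthickening (childFn ϕ A hdense p true).2 (childFn ϕ A hdense p true).1) := by
  have hd : p.1 ∈ CMinIn ϕ A ∧ 0 < p.2 := ⟨h1, h2⟩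
  obtain ⟨hq1, hq2, hq3, hq4, hq5⟩ := Classical.choose_spec (stepEx ϕ A hdense hd.1 hd.2)
  have hf : childFn ϕ A hdense p false =
      (p.1, (Classical.choose (stepEx ϕ A hdense hd.1 hd.2)).2) := by
    rw [childFn, dif_pos hd]
    rfl
  have ht : childFn ϕ A hdense p true = Classical.choose (stepEx ϕ A hdense hd.1 hd.2) := by
    rw [childFn, dif_pos hd]
    rfl
  constructor
  · intro i
    rcases Bool.eq_false_or_eq_true i with hi | hi <;> subst hi
    · rw [ht]
      exact ⟨hq1, hq2, hq4⟩
    · rw [hf]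
      exact ⟨h1, hq2, cthickening_mono (by linarith) _⟩
  · rw [hf, ht]
    exact hq5

/-- The Cantor scheme of minimal sets with radii, along a branch `a`. -/
noncomputable def seqFn (Λ₀ : Set M) (ε₀ : ℝ) (a : ℕ → Bool) : ℕ → Set M × ℝ :=
  fun n => Nat.rec (Λ₀, ε₀ / 2) (fun n p => childFn ϕ A hdense p (a n)) n

theorem seqFn_zero (Λ₀ : Set M) (ε₀ : ℝ) (a : ℕ → Bool) :
    seqFn ϕ A hdense Λ₀ ε₀ a 0 = (Λ₀, ε₀ / 2) := rfl

theorem seqFn_succ (Λ₀ : Set M) (ε₀ : ℝ) (a : ℕ → Bool) (n : ℕ) :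
    seqFn ϕ A hdense Λ₀ ε₀ a (n + 1) =
      childFn ϕ A hdense (seqFn ϕ A hdense Λ₀ ε₀ a n) (a n) := rfl

end ContinuumAux


theorem continuum_of_minimal_sets
    {M : Type*} [MetricSpace M] [LocallyCompactSpace M]
    (ϕ : Flow ℝ M) (A : Set M) (hA : IsOpen A)
    (hne : (CMinIn ϕ A).Nonempty)
    (hdense : ∀ Λ ∈ CMinIn ϕ A, ∀ ε > (0 : ℝ),
      ∃ Λ' ∈ CMinIn ϕ A, Λ' ≠ Λ ∧ Metric.hausdorffDist Λ' Λ < ε)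
    (Λ₀ : Set M) (hΛ₀ : Λ₀ ∈ CMinIn ϕ A) (ε₀ : ℝ) (hε₀ : 0 < ε₀)
    (hball : IsCompact (Metric.cthickening ε₀ Λ₀))
    (hsub : Metric.cthickening ε₀ Λ₀ ⊆ A) :
    ∃ F : Set (Set M), Cardinal.mk F = Cardinal.continuum ∧
      F.Pairwise Disjoint ∧
      ∀ Λ ∈ F, Λ ∈ CMinIn ϕ A ∧ Λ ⊆ Metric.thickening ε₀ Λ₀ := by
  classical
  set S := seqFn ϕ A hdense Λ₀ ε₀ with hSdef
  -- validity of every node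
  have valid : ∀ (a : ℕ → Bool) (n : ℕ), (S a n).1 ∈ CMinIn ϕ A ∧ 0 < (S a n).2 := by
    intro a n
    induction n with
    | zero => exact ⟨hΛ₀, half_pos hε₀⟩
    | succ n ih =>
      rw [hSdef, seqFn_succ]
      exact ((childFn_spec ϕ A hdense ih.1 ih.2).1 (a n)).imp id (fun h => h.1)
  -- nestedness of closed thickenings along a branch
  have nested : ∀ (a : ℕ → Bool) (n : ℕ),
      cthickening (S a (n + 1)).2 (S a (n + 1)).1 ⊆ cthickening (S a n).2 (S a n).1 := by
    intro a n
    rw [hSdef, seqFn_succ]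
    exact ((childFn_spec ϕ A hdense (valid a n).1 (valid a n).2).1 (a n)).2.2
  have D_anti : ∀ (a : ℕ → Bool) {n m : ℕ}, n ≤ m →
      cthickening (S a m).2 (S a m).1 ⊆ cthickening (S a n).2 (S a n).1 := by
    intro a n m hnm
    induction m, hnm using Nat.le_induction with
    | base => exact subset_rfl
    | succ m hnm ih => exact (nested a m).trans ih
  have D0 : ∀ a : ℕ → Bool, cthickening (S a 0).2 (S a 0).1 ⊆ thickening ε₀ Λ₀ := fun a =>
    cthickening_subset_thickening' hε₀ (half_lt_self hε₀) Λ₀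
  -- the limit sets along branches
  set C : (ℕ → Bool) → ℕ → Set M :=
    fun a n => closure (⋃ m, ⋃ (_ : n ≤ m), (S a m).1) with hCdef
  set K : (ℕ → Bool) → Set M := fun a => ⋂ n, C a n with hKdef
  have hCD : ∀ a n, C a n ⊆ cthickening (S a n).2 (S a n).1 := by
    intro a n
    refine closure_minimal (iUnion₂_subset fun m hm => ?_) isClosed_cthickening
    exact (self_subset_cthickening _).trans (D_anti a hm)
  have hCthick : ∀ a n, C a n ⊆ thickening ε₀ Λ₀ := fun a n =>
    (hCD a n).trans ((D_anti a (Nat.zero_le n)).trans (D0 a))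
  have hCclosed : ∀ a n, IsClosed (C a n) := fun a n => isClosed_closure
  have hCcompact : ∀ a n, IsCompact (C a n) := fun a n =>
    hball.of_isClosed_subset (hCclosed a n)
      ((hCthick a n).trans (thickening_subset_cthickening _ _))
  have hCne : ∀ a n, (C a n).Nonempty := by
    intro a n
    exact ((valid a n).1.2.1.1).mono
      ((subset_iUnion₂ (s := fun m _ => (S a m).1) n le_rfl).trans subset_closure)
  have hCanti : ∀ a {n m : ℕ}, n ≤ m → C a m ⊆ C a n := by
    intro a n m hnm
    exact closure_mono (iUnion₂_mono' fun k hk => ⟨k, hnm.trans hk, subset_rfl⟩)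
  have hKne : ∀ a, (K a).Nonempty := by
    intro a
    exact IsCompact.nonempty_iInter_of_directed_nonempty_isCompact_isClosed _
      (fun n m => ⟨max n m, hCanti a (le_max_left _ _), hCanti a (le_max_right _ _)⟩)
      (hCne a) (hCcompact a) (hCclosed a)
  have hKinv : ∀ a, flowInv ϕ (K a) := fun a =>
    limsup_flowInv ϕ (fun m => (S a m).1) (fun m => (valid a m).1.2.1.2.2.1)
  have hKclosed : ∀ a, IsClosed (K a) := fun a => isClosed_iInter fun n => hCclosed a n
  have hKcompact : ∀ a, IsCompact (K a) := fun a =>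
    (hCcompact a 0).of_isClosed_subset (hKclosed a) (iInter_subset _ 0)
  have hKD : ∀ a n, K a ⊆ cthickening (S a n).2 (S a n).1 := fun a n =>
    (iInter_subset _ n).trans (hCD a n)
  -- select a minimal set in each branch limit
  have hex : ∀ a : ℕ → Bool, ∃ m, m ⊆ K a ∧ IsMinimalSet ϕ m := fun a =>
    exists_minimal_subset ϕ (hKne a) (hKcompact a) (hKclosed a) (hKinv a)
  choose f hfK hfmin using hex
  -- branches agreeing below n give the same node
  have seq_congr : ∀ (a b : ℕ → Bool) (n : ℕ), (∀ m, m < n → a m = b m) → S a n = S b n := by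
    intro a b n
    induction n with
    | zero => intro _; rfl
    | succ n ih =>
      intro h
      rw [hSdef, seqFn_succ, seqFn_succ, ← hSdef,
        ih (fun m hm => h m (hm.trans (Nat.lt_succ_self n))), h n (Nat.lt_succ_self n)]
  -- distinct branches give disjoint minimal sets
  have hdisj : ∀ a b : ℕ → Bool, a ≠ b → Disjoint (f a) (f b) := by
    intro a b hab
    have hexn : ∃ n, a n ≠ b n := by
      by_contra h
      push_neg at h
      exact hab (funext h)
    set n := Nat.find hexn with hn_def
    have hn : a n ≠ b n := Nat.find_spec hexn
    have hlt : ∀ m, m < n → a m = b m := fun m hm => not_not.1 (Nat.find_min hexn hm)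
    have hsame : S a n = S b n := seq_congr a b n hlt
    have hsplit : Disjoint (cthickening (S a (n + 1)).2 (S a (n + 1)).1)
        (cthickening (S b (n + 1)).2 (S b (n + 1)).1) := by
      have hs := (childFn_spec ϕ A hdense (valid a n).1 (valid a n).2).2
      have e1 : S a (n + 1) = childFn ϕ A hdense (S a n) (a n) := by
        rw [hSdef, seqFn_succ]
      have e2 : S b (n + 1) = childFn ϕ A hdense (S a n) (b n) := by
        rw [hSdef, seqFn_succ, ← hSdef, hsame]
      rw [e1, e2]
      rcases Bool.eq_false_or_eq_true (a n) with ha | ha <;>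
        rcases Bool.eq_false_or_eq_true (b n) with hb | hb
      · exact absurd (ha.trans hb.symm) hn
      · rw [ha, hb]
        exact hs.symm
      · rw [ha, hb]
        exact hs
      · exact absurd (ha.trans hb.symm) hn
    exact hsplit.mono ((hfK a).trans (hKD a (n + 1))) ((hfK b).trans (hKD b (n + 1)))
  have hinj : Function.Injective f := by
    intro a b hab
    by_contra hne'
    have hdab := hdisj a b hne'
    rw [hab] at hdab
    exact ((hfmin b).1).ne_empty (disjoint_self.mp hdab)
  refine ⟨Set.range f, ?_, ?_, ?_⟩
  · have h2 : (Cardinal.mk (ℕ → Bool)) = Cardinal.continuum := by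
      rw [← Cardinal.power_def, Cardinal.mk_bool, Cardinal.mk_nat, Cardinal.two_power_aleph0]
    have h1 := Cardinal.mk_range_eq_of_injective hinj
    rw [Cardinal.lift_uzero, h2, Cardinal.lift_continuum] at h1
    exact h1
  · rintro x ⟨a, rfl⟩ y ⟨b, rfl⟩ hxy
    exact hdisj a b fun h => hxy (by rw [h])
  · rintro Λ ⟨a, rfl⟩
    have h1 : f a ⊆ thickening ε₀ Λ₀ :=
      (hfK a).trans ((hKD a 0).trans (D0 a))
    have hcpt : IsCompact (f a) :=
      (hKcompact a).of_isClosed_subset (hfmin a).2.1 (hfK a)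
    exact ⟨⟨hcpt, hfmin a, h1.trans ((thickening_subset_cthickening _ _).trans hsub)⟩, h1⟩
end

section
/- The Continuum Hypothesis implies: if L is an uncountable separable metric space, then there exists a countable (possibly empty) set J ⊆ L such that D := L \ J is nonempty and every open ball around every point of D contains continuum-many points of D. -/
open Set Metric TopologicalSpace

lemma CH_transfer (hCH : ¬ ∃ c : Cardinal.{v}, Cardinal.aleph0 < c ∧ c < Cardinal.continuum) :
    ¬ ∃ c : Cardinal.{u}, Cardinal.aleph0 < c ∧ c < Cardinal.continuum := by
  rintro ⟨c, h1, h2⟩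
  have hle : c ≤ Cardinal.lift.{u} Cardinal.continuum.{0} := by
    rw [Cardinal.lift_continuum]; exact h2.le
  obtain ⟨c₀, rfl⟩ := Cardinal.mem_range_lift_of_le hle
  apply hCH
  refine ⟨Cardinal.lift.{v} c₀, ?_, ?_⟩
  · rw [← Cardinal.lift_aleph0.{v,0}, Cardinal.lift_lt]
    rw [← Cardinal.lift_aleph0.{u,0}, Cardinal.lift_lt] at h1
    exact h1
  · rw [← Cardinal.lift_continuum.{v,0}, Cardinal.lift_lt]
    rw [← Cardinal.lift_continuum.{u,0}, Cardinal.lift_lt] at h2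
    exact h2

theorem CH_implies_cDH
    (hCH : ¬ ∃ c : Cardinal, Cardinal.aleph0 < c ∧ c < Cardinal.continuum)
    (L : Type*) [MetricSpace L] [SeparableSpace L] (hL : ¬ Countable L) :
    ∃ J : Set L, J.Countable ∧ Jᶜ.Nonempty ∧
      ∀ x ∈ Jᶜ, ∀ ε > (0 : ℝ),
        Cardinal.mk ↥(Metric.ball x ε ∩ Jᶜ) = Cardinal.continuum := by
  have : SecondCountableTopology L := UniformSpace.secondCountable_of_separable L
  obtain ⟨B, hBc, -, hBbasis⟩ := exists_countable_basis L
  -- cardinality of L is at most continuum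
  have hcard : Cardinal.mk L ≤ Cardinal.continuum := by
    have hinj : Function.Injective (fun x : L => {s : ↥B | x ∈ (s : Set L)}) := by
      intro x y hxy
      by_contra hne
      obtain ⟨s, hsB, hxs, hsub⟩ :=
        hBbasis.exists_subset_of_mem_open (Set.mem_compl_singleton_iff.mpr hne)
          (isOpen_compl_singleton (x := y))
      have hxy' : {s : ↥B | x ∈ (s : Set L)} = {s : ↥B | y ∈ (s : Set L)} := hxy
      have hmem : (⟨s, hsB⟩ : ↥B) ∈ {s : ↥B | y ∈ (s : Set L)} := by
        rw [← hxy']; exact hxs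
      exact hsub hmem rfl
    calc Cardinal.mk L ≤ Cardinal.mk (Set ↥B) := Cardinal.mk_le_of_injective hinj
      _ = 2 ^ Cardinal.mk ↥B := Cardinal.mk_set
      _ ≤ 2 ^ Cardinal.aleph0 := by
          exact Cardinal.power_le_power_left two_ne_zero
            ((Cardinal.mk_le_aleph0_iff).mpr hBc.to_subtype)
      _ = Cardinal.continuum := Cardinal.two_power_aleph0
  -- J: union of countable basic open sets
  set J : Set L := ⋃₀ {s ∈ B | s.Countable} with hJ
  have hJc : J.Countable :=
    Set.Countable.sUnion (hBc.mono (Set.sep_subset _ _)) (fun s hs => hs.2)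
  refine ⟨J, hJc, ?_, ?_⟩
  · rw [Set.nonempty_compl]
    intro h
    exact hL (Set.countable_univ_iff.mp (h ▸ hJc))
  · intro x hx ε hε
    -- the set is uncountable
    have key : ¬ (Metric.ball x ε ∩ Jᶜ).Countable := by
      obtain ⟨s, hsB, hxs, hsub⟩ :=
        hBbasis.exists_subset_of_mem_open (Metric.mem_ball_self hε) Metric.isOpen_ball
      have hsnc : ¬ s.Countable := fun hc => hx (Set.mem_sUnion.mpr ⟨s, ⟨hsB, hc⟩, hxs⟩)
      intro hc
      apply hsnc
      have : s ⊆ (Metric.ball x ε ∩ Jᶜ) ∪ J := by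
        intro y hy
        by_cases hyJ : y ∈ J
        · exact Or.inr hyJ
        · exact Or.inl ⟨hsub hy, hyJ⟩
      exact (hc.union hJc).mono this
    have h1 : Cardinal.aleph0 < Cardinal.mk ↥(Metric.ball x ε ∩ Jᶜ) := by
      rw [← not_le, Cardinal.le_aleph0_iff_set_countable]
      exact key
    have h2 : Cardinal.mk ↥(Metric.ball x ε ∩ Jᶜ) ≤ Cardinal.continuum :=
      (Cardinal.mk_set_le _).trans hcard
    rcases lt_or_eq_of_le h2 with h | h
    · exact absurd ⟨_, h1, h⟩ (CH_transfer hCH)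
    · exact h
end
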